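/- arXiv:1408.2675 — 7 statements merged into one kernel-verified Lean document; each statement's English description precedes it below -/
import Mathlib

section
/- Fix an integer N ≥ 1, a real sequence (f_k)_{k≥0}, and weight parameters η_k ∈ [0,1). Let T̄_k be defined by T̄_0 = f_0, T̄_k = (1−η_{k−1}) f_k + η_{k−1} T̄_{k−1} for 1 ≤ k ≤ N−1, and T̄_k = Σ_{j=0}^{N−1} (η_{k−1}⋯η_{k−j})(1−η_{k−j−1}) f_{k−j} + (η_{k−1}⋯η_{k−N}) f_{k−N} for k ≥ N (empty product equal to 1), and set f_{l(k)} = max_{0≤j≤min(k,N)} f_{k−j}. Define the nonmonotone term by T_k = f_{l(k)} for 0 ≤ k ≤ N−1 and T_k = max{T̄_k, f_k} for k ≥ N. Then f_k ≤ T_k ≤ f_{l(k)} for all k ≥ 0. -/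
/-- Lemma 1 for the nonmonotone term (11): with `f_{l(k)} = max_{0≤j≤min(k,N)} f_{k-j}`,
`T_k = f_{l(k)}` for `k ≤ N-1` and `T_k = max{T̄_k, f_k}` for `k ≥ N`, one has
`f_k ≤ T_k ≤ f_{l(k)}` for all `k ≥ 0`. -/
theorem fk_le_Tk_le_flk (N : ℕ) (hN : 1 ≤ N) (f η : ℕ → ℝ)
    (hη : ∀ k, η k ∈ Set.Ico (0 : ℝ) 1)
    (Tbar T fl : ℕ → ℝ)
    (hfl : ∀ k, fl k =
      (Finset.range (min k N + 1)).sup' Finset.nonempty_range_add_one (fun j => f (k - j)))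
    (hT0 : Tbar 0 = f 0)
    (hTrec : ∀ k, 1 ≤ k → k ≤ N - 1 →
      Tbar k = (1 - η (k - 1)) * f k + η (k - 1) * Tbar (k - 1))
    (hTsum : ∀ k, N ≤ k → Tbar k =
      (∑ j ∈ Finset.range N,
          (∏ i ∈ Finset.range j, η (k - 1 - i)) * (1 - η (k - j - 1)) * f (k - j))
        + (∏ i ∈ Finset.range N, η (k - 1 - i)) * f (k - N))
    (hTlt : ∀ k, k ≤ N - 1 → T k = fl k)
    (hTge : ∀ k, N ≤ k → T k = max (Tbar k) (f k)) :
    ∀ k, f k ≤ T k ∧ T k ≤ fl k := by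
  intro k
  have hfle : ∀ j, j ≤ min k N → f (k - j) ≤ fl k := by
    intro j hj
    rw [hfl]
    exact Finset.le_sup' (fun j => f (k - j)) (Finset.mem_range.mpr (by omega))
  have hfk : f k ≤ fl k := by
    have := hfle 0 (Nat.zero_le _)
    simpa using this
  by_cases hk : k ≤ N - 1
  · rw [hTlt k hk]
    exact ⟨hfk, le_refl _⟩
  · have hkN : N ≤ k := by omega
    rw [hTge k hkN]
    refine ⟨le_max_right _ _, max_le ?_ hfk⟩
    -- Tbar k ≤ fl k
    set P : ℕ → ℝ := fun j => ∏ i ∈ Finset.range j, η (k - 1 - i) with hP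
    have hPnn : ∀ j, 0 ≤ P j := fun j =>
      Finset.prod_nonneg fun i _ => (hη _).1
    have hPstep : ∀ j, P (j + 1) = P j * η (k - 1 - j) := fun j =>
      Finset.prod_range_succ _ j
    have hminkN : min k N = N := min_eq_right hkN
    have hterm : ∀ j ∈ Finset.range N,
        P j * (1 - η (k - j - 1)) * f (k - j) ≤ (P j - P (j + 1)) * fl k := by
      intro j hj
      have hjN : j < N := Finset.mem_range.mp hj
      have hidx : k - j - 1 = k - 1 - j := by omega
      have hw : P j * (1 - η (k - j - 1)) = P j - P (j + 1) := by
        rw [hPstep j, hidx]; ring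
      rw [hw]
      have hwnn : 0 ≤ P j - P (j + 1) := by
        rw [← hw]
        exact mul_nonneg (hPnn j) (by linarith [(hη (k - j - 1)).2])
      exact mul_le_mul_of_nonneg_left (hfle j (by omega)) hwnn
    calc Tbar k = (∑ j ∈ Finset.range N,
            P j * (1 - η (k - j - 1)) * f (k - j)) + P N * f (k - N) := hTsum k hkN
      _ ≤ (∑ j ∈ Finset.range N, (P j - P (j + 1)) * fl k) + P N * fl k := by
          refine add_le_add (Finset.sum_le_sum hterm) ?_
          exact mul_le_mul_of_nonneg_left (hfle N (by omega)) (hPnn N)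
      _ = (P 0 - P N) * fl k + P N * fl k := by
          rw [← Finset.sum_mul, Finset.sum_range_sub' (fun j => P j) N]
      _ = fl k := by
          have : P 0 = 1 := Finset.prod_range_zero _
          rw [this]; ring
end

section
/- Fix an integer N ≥ 1, a real sequence (f_k)_{k≥0}, and weight parameters η_k ∈ [0,1). Let T̄_k be defined by T̄_0 = f_0, T̄_k = (1−η_{k−1}) f_k + η_{k−1} T̄_{k−1} for 1 ≤ k ≤ N−1, and T̄_k = Σ_{j=0}^{N−1} (η_{k−1}⋯η_{k−j})(1−η_{k−j−1}) f_{k−j} + (η_{k−1}⋯η_{k−N}) f_{k−N} for k ≥ N (empty product equal to 1), and set f_{l(k)} = max_{0≤j≤min(k,N)} f_{k−j}. Define the nonmonotone term by T_0 = f_0, T_k = f_k + η_{k−1}(T̄_k − f_k) for 1 ≤ k ≤ N−1, and T_k = max{T̄_k, f_k} for k ≥ N. If in addition f_{k+1} ≤ T_k for all k ≥ 0 (as is guaranteed by the acceptance test of the nonmonotone Armijo-type line search, since σ α ⟨g_k, d_k⟩ < 0), then f_k ≤ T_k ≤ f_{l(k)} for all k ≥ 0. -/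
/-- Lemma 1 for the nonmonotone term (10): with `f_{l(k)} = max_{0≤j≤min(k,N)} f_{k-j}`,
`T_0 = f_0`, `T_k = f_k + η_{k-1}(T̄_k - f_k)` for `1 ≤ k ≤ N-1` and
`T_k = max{T̄_k, f_k}` for `k ≥ N`, assuming moreover `f_{k+1} ≤ T_k` for all `k`
(as guaranteed by the acceptance test of the nonmonotone Armijo-type line search),
one has `f_k ≤ T_k ≤ f_{l(k)}` for all `k ≥ 0`. -/
theorem fk_le_Tk_le_flk' (N : ℕ) (hN : 1 ≤ N) (f η : ℕ → ℝ)
    (hη : ∀ k, η k ∈ Set.Ico (0 : ℝ) 1)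
    (Tbar T fl : ℕ → ℝ)
    (hfl : ∀ k, fl k =
      (Finset.range (min k N + 1)).sup' Finset.nonempty_range_add_one (fun j => f (k - j)))
    (hT0 : Tbar 0 = f 0)
    (hTrec : ∀ k, 1 ≤ k → k ≤ N - 1 →
      Tbar k = (1 - η (k - 1)) * f k + η (k - 1) * Tbar (k - 1))
    (hTsum : ∀ k, N ≤ k → Tbar k =
      (∑ j ∈ Finset.range N,
          (∏ i ∈ Finset.range j, η (k - 1 - i)) * (1 - η (k - j - 1)) * f (k - j))
        + (∏ i ∈ Finset.range N, η (k - 1 - i)) * f (k - N))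
    (hT0' : T 0 = f 0)
    (hTlt : ∀ k, 1 ≤ k → k ≤ N - 1 → T k = f k + η (k - 1) * (Tbar k - f k))
    (hTge : ∀ k, N ≤ k → T k = max (Tbar k) (f k))
    (haccept : ∀ k, f (k + 1) ≤ T k) :
    ∀ k, f k ≤ T k ∧ T k ≤ fl k := by
  have hη0 : ∀ k, 0 ≤ η k := fun k => (hη k).1
  have hη1 : ∀ k, η k < 1 := fun k => (hη k).2
  have hfl_ge : ∀ k j, j ≤ min k N → f (k - j) ≤ fl k := by
    intro k j hj
    rw [hfl k]
    exact Finset.le_sup' (fun j => f (k - j)) (Finset.mem_range.mpr (Nat.lt_succ_of_le hj))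
  have hfl_self : ∀ k, f k ≤ fl k := fun k => by
    simpa using hfl_ge k 0 (Nat.zero_le _)
  have hfl_mono : ∀ k, k + 1 ≤ N → fl k ≤ fl (k + 1) := by
    intro k hk
    rw [hfl k]
    apply Finset.sup'_le
    intro j hj
    rw [Finset.mem_range] at hj
    have hj' : j ≤ min k N := Nat.lt_succ_iff.mp hj
    have h1 : k - j = (k + 1) - (j + 1) := by omega
    rw [h1]
    exact hfl_ge (k + 1) (j + 1) (by omega)
  have hTbar_big : ∀ m, N ≤ m → Tbar m ≤ fl m := by
    intro m hm
    rw [hTsum m hm]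
    set P : ℕ → ℝ := fun j => ∏ i ∈ Finset.range j, η (m - 1 - i) with hP
    have hPnn : ∀ j, 0 ≤ P j := fun j => Finset.prod_nonneg (fun i _ => hη0 _)
    have hPsucc : ∀ j, P (j + 1) = P j * η (m - j - 1) := by
      intro j
      simp only [hP]
      rw [Finset.prod_range_succ]
      congr 2
      omega
    have hsum : ∑ j ∈ Finset.range N, P j * (1 - η (m - j - 1)) = 1 - P N := by
      have h1 : ∀ j, P j * (1 - η (m - j - 1)) = P j - P (j + 1) := by
        intro j; rw [hPsucc j]; ring
      rw [Finset.sum_congr rfl (fun j _ => h1 j), Finset.sum_range_sub']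
      simp [hP]
    have hflm : ∀ j, j ≤ N → f (m - j) ≤ fl m := by
      intro j hj; exact hfl_ge m j (by omega)
    calc ∑ j ∈ Finset.range N, P j * (1 - η (m - j - 1)) * f (m - j) + P N * f (m - N)
        ≤ ∑ j ∈ Finset.range N, P j * (1 - η (m - j - 1)) * fl m + P N * fl m := by
          apply add_le_add
          · apply Finset.sum_le_sum
            intro j hj
            have hc : 0 ≤ P j * (1 - η (m - j - 1)) :=
              mul_nonneg (hPnn j) (by linarith [hη1 (m - j - 1)])
            exact mul_le_mul_of_nonneg_left
              (hflm j (le_of_lt (Finset.mem_range.mp hj))) hc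
          · exact mul_le_mul_of_nonneg_left (hflm N le_rfl) (hPnn N)
      _ = (1 - P N) * fl m + P N * fl m := by rw [← Finset.sum_mul, hsum]
      _ = fl m := by ring
  suffices h : ∀ k, (f k ≤ T k ∧ T k ≤ fl k) ∧
      (k < N → T k ≤ Tbar k ∧ Tbar k ≤ fl k ∧ f k ≤ Tbar k) by
    intro k; exact (h k).1
  intro k
  induction k with
  | zero =>
    have hfl0 : fl 0 = f 0 := by
      rw [hfl 0]; simp [Finset.range_one]
    refine ⟨⟨?_, ?_⟩, fun _ => ⟨?_, ?_, ?_⟩⟩ <;> simp [hT0', hT0, hfl0]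
  | succ k ih =>
    by_cases hk1 : k + 1 < N
    · have hkN : k < N := by omega
      obtain ⟨⟨hfT, hTfl⟩, hsmall⟩ := ih
      obtain ⟨hTTb, hTbfl, hfTb⟩ := hsmall hkN
      have hacc := haccept k
      have hfTb1 : f (k + 1) ≤ Tbar k := le_trans hacc hTTb
      have hrec : Tbar (k + 1) = (1 - η k) * f (k + 1) + η k * Tbar k := by
        have := hTrec (k + 1) (by omega) (by omega)
        simpa using this
      have hT_eq : T (k + 1) = f (k + 1) + η k * (Tbar (k + 1) - f (k + 1)) := by
        have := hTlt (k + 1) (by omega) (by omega)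
        simpa using this
      have hTb_ge : f (k + 1) ≤ Tbar (k + 1) := by
        rw [hrec]; nlinarith [hη0 k, hη1 k]
      have hTb_fl : Tbar (k + 1) ≤ fl (k + 1) := by
        have h1 : Tbar k ≤ fl (k + 1) := le_trans hTbfl (hfl_mono k (by omega))
        have h2 : f (k + 1) ≤ fl (k + 1) := hfl_self _
        rw [hrec]; nlinarith [hη0 k, hη1 k]
      have hfT1 : f (k + 1) ≤ T (k + 1) := by
        rw [hT_eq]; nlinarith [hη0 k]
      have hTTb1 : T (k + 1) ≤ Tbar (k + 1) := by
        rw [hT_eq]; nlinarith [hη0 k, hη1 k]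
      exact ⟨⟨hfT1, le_trans hTTb1 hTb_fl⟩, fun _ => ⟨hTTb1, hTb_fl, hTb_ge⟩⟩
    · have hNk : N ≤ k + 1 := by omega
      have hT := hTge (k + 1) hNk
      have hTb := hTbar_big (k + 1) hNk
      refine ⟨⟨?_, ?_⟩, fun h => absurd h (by omega)⟩
      · rw [hT]; exact le_max_right _ _
      · rw [hT]; exact max_le hTb (hfl_self _)
end

section
/- Fix an integer N ≥ 1 and a real sequence (f_k)_{k≥0}, and set f_{l(k)} = max_{0≤j≤min(k,N)} f_{k−j}. If f_{k+1} ≤ f_{l(k)} for all k ≥ 0, then the sequence (f_{l(k)})_{k≥0} is non-increasing, i.e., f_{l(k+1)} ≤ f_{l(k)} for all k ≥ 0. -/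
/-- If `f_{k+1} ≤ f_{l(k)}` for all `k`, where
`f_{l(k)} = max_{0≤j≤min(k,N)} f_{k-j}` is the max-based nonmonotone term of
Grippo, Lampariello and Lucidi, then the sequence `(f_{l(k)})` is non-increasing. -/
theorem flk_monotone_decreasing (N : ℕ) (hN : 1 ≤ N) (f fl : ℕ → ℝ)
    (hfl : ∀ k, fl k =
      (Finset.range (min k N + 1)).sup' Finset.nonempty_range_add_one (fun j => f (k - j)))
    (hdec : ∀ k, f (k + 1) ≤ fl k) :
    ∀ k, fl (k + 1) ≤ fl k := by
  intro k
  rw [hfl (k + 1)]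
  apply Finset.sup'_le
  intro j hj
  rw [Finset.mem_range] at hj
  rcases Nat.eq_zero_or_pos j with rfl | hjpos
  · simpa using hdec k
  · have hjle : j ≤ min (k + 1) N := Nat.lt_succ_iff.mp hj
    have h1 : k + 1 - j = k - (j - 1) := by omega
    rw [h1, hfl k]
    have := Nat.le_min.mp hjle
    exact Finset.le_sup' (fun j => f (k - j)) (Finset.mem_range.mpr (by omega))
end

section
/- Let n ≥ 1 and let f : ℝⁿ → ℝ be continuously differentiable with gradient g. Fix s ∈ (0,1], ρ ∈ (0,1), σ ∈ (0,1/2), an integer N ≥ 1, and weights η_k ∈ [0,1). Let x_{k+1} = x_k + α_k d_k, where α_k = s ρ^{j_k} and j_k is the smallest j ∈ ℕ with f(x_k + s ρ^j d_k) ≤ T_k + σ s ρ^j ⟨g(x_k), d_k⟩; here f_k = f(x_k), f_{l(k)} = max_{0≤j≤min(k,N)} f_{k−j}, T̄_0 = f_0, T̄_k = (1−η_{k−1}) f_k + η_{k−1} T̄_{k−1} for 1 ≤ k ≤ N−1, T̄_k = Σ_{j=0}^{N−1}(η_{k−1}⋯η_{k−j})(1−η_{k−j−1}) f_{k−j} +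 (η_{k−1}⋯η_{k−N}) f_{k−N} for k ≥ N, and T_k = f_{l(k)} for k ≤ N−1, T_k = max{T̄_k, f_k} for k ≥ N. Assume (H1) the level set L(x_0) = {x ∈ ℝⁿ : f(x) ≤ f(x_0)} is bounded; (H2) there exist an open convex set C ⊇ L(x_0) and L > 0 with ‖g(x) − g(y)‖ ≤ L‖x − y‖ for all x, y ∈ C; and (H3) there exist 0 < c₁ < 1 < c₂ with ⟨g(x_k), d_k⟩ ≤ −c₁‖g(x_k)‖² and ‖d_k‖ ≤ c₂‖g(x_k)‖ for all k. Then the limits lim_{k→∞} T_k and lim_{k→∞} f(x_k) both exist and are equal. -/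
open Filter Finset

private lemma telescope_norm {E : Type*} [NormedAddCommGroup E] (x : ℕ → E) (q m : ℕ) :
    ‖x (q + m) - x q‖ ≤ ∑ i ∈ Finset.range m, ‖x (q + i + 1) - x (q + i)‖ := by
  induction m with
  | zero => simp
  | succ m ih =>
    rw [Finset.sum_range_succ]
    have h := dist_triangle (x (q + (m + 1))) (x (q + m)) (x q)
    simp only [dist_eq_norm] at h
    have : q + (m + 1) = q + m + 1 := by ring
    rw [this] at h ⊢
    linarith

private lemma uc_transfer {E : Type*} [PseudoMetricSpace E] {φ : E → ℝ} {K : Set E}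
    (hK : IsCompact K) (hφ : ContinuousOn φ K) {a b : ℕ → E} (ha : ∀ k, a k ∈ K)
    (hb : ∀ k, b k ∈ K) (hd : Tendsto (fun k => dist (a k) (b k)) atTop (nhds 0))
    {l : ℝ} (hfb : Tendsto (fun k => φ (b k)) atTop (nhds l)) :
    Tendsto (fun k => φ (a k)) atTop (nhds l) := by
  have huc := hK.uniformContinuousOn_of_continuous hφ
  rw [Metric.uniformContinuousOn_iff] at huc
  have hdiff : Tendsto (fun k => φ (a k) - φ (b k)) atTop (nhds 0) := by
    rw [Metric.tendsto_atTop]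
    intro ε hε
    obtain ⟨δ, hδ, hball⟩ := huc ε hε
    obtain ⟨M, hM⟩ := Metric.tendsto_atTop.1 hd δ hδ
    refine ⟨M, fun m hm => ?_⟩
    have h1 : dist (a m) (b m) < δ := by
      have := hM m hm
      rwa [Real.dist_eq, sub_zero, abs_of_nonneg dist_nonneg] at this
    have h2 := hball _ (ha m) _ (hb m) h1
    rw [Real.dist_eq] at h2
    rwa [dist_zero_right, Real.norm_eq_abs]
  have := hdiff.add hfb
  simpa using this

/-- Lemma 2: for Algorithm NMLS with the nonmonotone term (11), under (H1)–(H3),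
the sequence of nonmonotone reference values `T_k` and the sequence of function
values `f(x_k)` converge to a common limit. -/
theorem nmls_Tk_and_fk_common_limit (n : ℕ) (hn : 1 ≤ n)
    (f : EuclideanSpace ℝ (Fin n) → ℝ)
    (g : EuclideanSpace ℝ (Fin n) → EuclideanSpace ℝ (Fin n))
    (hf : ContDiff ℝ 1 f) (hg : ∀ y, HasGradientAt f (g y) y)
    (s ρ σ : ℝ) (hs : s ∈ Set.Ioc (0 : ℝ) 1) (hρ : ρ ∈ Set.Ioo (0 : ℝ) 1)
    (hσ : σ ∈ Set.Ioo (0 : ℝ) (1 / 2))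
    (N : ℕ) (hN : 1 ≤ N) (η : ℕ → ℝ) (hη : ∀ k, η k ∈ Set.Ico (0 : ℝ) 1)
    (x d : ℕ → EuclideanSpace ℝ (Fin n)) (α : ℕ → ℝ) (jk : ℕ → ℕ)
    (Tbar T fl : ℕ → ℝ)
    (hfl : ∀ k, fl k = (Finset.range (min k N + 1)).sup'
      Finset.nonempty_range_add_one (fun j => f (x (k - j))))
    (hT0 : Tbar 0 = f (x 0))
    (hTrec : ∀ k, 1 ≤ k → k ≤ N - 1 →
      Tbar k = (1 - η (k - 1)) * f (x k) + η (k - 1) * Tbar (k - 1))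
    (hTsum : ∀ k, N ≤ k → Tbar k =
      (∑ j ∈ Finset.range N,
          (∏ i ∈ Finset.range j, η (k - 1 - i)) * (1 - η (k - j - 1)) * f (x (k - j)))
        + (∏ i ∈ Finset.range N, η (k - 1 - i)) * f (x (k - N)))
    (hTlt : ∀ k, k ≤ N - 1 → T k = fl k)
    (hTge : ∀ k, N ≤ k → T k = max (Tbar k) (f (x k)))
    (hjk : ∀ k, IsLeast {j : ℕ | f (x k + (s * ρ ^ j) • d k) ≤
      T k + σ * (s * ρ ^ j) * (inner ℝ (g (x k)) (d k) : ℝ)} (jk k))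
    (hα : ∀ k, α k = s * ρ ^ (jk k))
    (hx : ∀ k, x (k + 1) = x k + α k • d k)
    (H1 : Bornology.IsBounded {y : EuclideanSpace ℝ (Fin n) | f y ≤ f (x 0)})
    (H2 : ∃ C : Set (EuclideanSpace ℝ (Fin n)), IsOpen C ∧ Convex ℝ C ∧
      {y : EuclideanSpace ℝ (Fin n) | f y ≤ f (x 0)} ⊆ C ∧
      ∃ L > (0 : ℝ), ∀ a ∈ C, ∀ b ∈ C, ‖g a - g b‖ ≤ L * ‖a - b‖)
    (H3 : ∃ c₁ c₂ : ℝ, 0 < c₁ ∧ c₁ < 1 ∧ 1 < c₂ ∧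
      ∀ k, (inner ℝ (g (x k)) (d k) : ℝ) ≤ -c₁ * ‖g (x k)‖ ^ 2 ∧
        ‖d k‖ ≤ c₂ * ‖g (x k)‖) :
    ∃ l : ℝ, Filter.Tendsto T Filter.atTop (nhds l) ∧
      Filter.Tendsto (fun k => f (x k)) Filter.atTop (nhds l) := by
  classical
  obtain ⟨c₁, c₂, hc₁, hc₁1, hc₂, hH3⟩ := H3
  have hs0 : 0 < s := hs.1
  have hρ0 : 0 < ρ := hρ.1
  have hρ1 : ρ < 1 := hρ.2
  have hσ0 : 0 < σ := hσ.1
  set F : ℕ → ℝ := fun k => f (x k) with hFdef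
  have hαpos : ∀ k, 0 < α k := fun k => by rw [hα]; positivity
  have hαs : ∀ k, α k ≤ s := fun k => by
    rw [hα]
    exact mul_le_of_le_one_right hs0.le (pow_le_one₀ hρ0.le hρ1.le)
  -- F k ≤ fl k
  have hFfl : ∀ k, F k ≤ fl k := by
    intro k
    rw [hfl]
    have h0 : 0 ∈ Finset.range (min k N + 1) := by simp
    exact Finset.le_sup' (fun j => f (x (k - j))) h0
  -- T k ≤ fl k
  have hTfl : ∀ k, T k ≤ fl k := by
    intro k
    by_cases hk : N ≤ k
    · rw [hTge k hk]
      have hmin : min k N = N := min_eq_right hk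
      have hFle : ∀ j ≤ N, f (x (k - j)) ≤ fl k := by
        intro j hj
        rw [hfl, hmin]
        exact Finset.le_sup' (fun j => f (x (k - j)))
          (Finset.mem_range.2 (Nat.lt_succ_of_le hj))
      have hbar : Tbar k ≤ fl k := by
        set p : ℕ → ℝ := fun j => ∏ i ∈ Finset.range j, η (k - 1 - i) with hp
        have hpnn : ∀ j, 0 ≤ p j := fun j => Finset.prod_nonneg fun i _ => (hη _).1
        have hwnn : ∀ j, 0 ≤ p j * (1 - η (k - j - 1)) := fun j =>
          mul_nonneg (hpnn j) (by linarith [(hη (k - j - 1)).2])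
        have hsum : ∑ j ∈ Finset.range N, p j * (1 - η (k - j - 1)) = 1 - p N := by
          have hterm : ∀ j, p j * (1 - η (k - j - 1)) = p j - p (j + 1) := by
            intro j
            have hps : p (j + 1) = p j * η (k - 1 - j) := Finset.prod_range_succ _ _
            have hidx : k - 1 - j = k - j - 1 := by omega
            rw [hps, hidx]; ring
          rw [Finset.sum_congr rfl fun j _ => hterm j, Finset.sum_range_sub']
          simp [hp]
        rw [hTsum k hk]
        calc (∑ j ∈ Finset.range N,
              (∏ i ∈ Finset.range j, η (k - 1 - i)) * (1 - η (k - j - 1)) * f (x (k - j)))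
            + (∏ i ∈ Finset.range N, η (k - 1 - i)) * f (x (k - N))
            ≤ (∑ j ∈ Finset.range N, p j * (1 - η (k - j - 1)) * fl k) + p N * fl k := by
              refine add_le_add (Finset.sum_le_sum fun j hj => ?_) ?_
              · exact mul_le_mul_of_nonneg_left
                  (hFle j (Finset.mem_range.1 hj).le) (hwnn j)
              · exact mul_le_mul_of_nonneg_left (hFle N le_rfl) (hpnn N)
          _ = (∑ j ∈ Finset.range N, p j * (1 - η (k - j - 1))) * fl k + p N * fl k := by
              rw [Finset.sum_mul]
          _ = fl k := by rw [hsum]; ring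
      exact max_le hbar (hFfl k)
    · rw [hTlt k (by omega)]
  -- F k ≤ T k
  have hFT : ∀ k, F k ≤ T k := by
    intro k
    by_cases hk : N ≤ k
    · rw [hTge k hk]; exact le_max_right _ _
    · rw [hTlt k (by omega)]; exact hFfl k
  set c : ℝ := σ * c₁ with hcdef
  have hc : 0 < c := mul_pos hσ0 hc₁
  -- Armijo consequence
  have hArm : ∀ k, F (k + 1) ≤ T k - c * (α k * ‖g (x k)‖ ^ 2) := by
    intro k
    have h1 := (hjk k).1
    simp only [Set.mem_setOf_eq] at h1
    rw [← hα k, ← hx k] at h1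
    have h2 := (hH3 k).1
    have h3 : σ * α k * (inner ℝ (g (x k)) (d k) : ℝ) ≤ σ * α k * (-c₁ * ‖g (x k)‖ ^ 2) :=
      mul_le_mul_of_nonneg_left h2 (mul_pos hσ0 (hαpos k)).le
    have : F (k + 1) ≤ T k + σ * (α k) * (inner ℝ (g (x k)) (d k) : ℝ) := h1
    calc F (k + 1) ≤ T k + σ * α k * (inner ℝ (g (x k)) (d k) : ℝ) := this
      _ ≤ T k + σ * α k * (-c₁ * ‖g (x k)‖ ^ 2) := by linarith
      _ = T k - c * (α k * ‖g (x k)‖ ^ 2) := by rw [hcdef]; ring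
  have hArm' : ∀ k, F (k + 1) ≤ fl k - c * (α k * ‖g (x k)‖ ^ 2) := fun k => by
    have h1 := hArm k; have h2 := hTfl k; linarith
  have hFsucc : ∀ k, F (k + 1) ≤ fl k := fun k => by
    have h1 := hArm' k
    have h2 : 0 ≤ c * (α k * ‖g (x k)‖ ^ 2) := mul_nonneg hc.le (mul_nonneg (hαpos k).le (sq_nonneg _))
    linarith
  -- fl antitone
  have hflanti : ∀ k, fl (k + 1) ≤ fl k := by
    intro k
    rw [hfl (k + 1)]
    apply Finset.sup'_le
    intro j hj
    rw [Finset.mem_range] at hj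
    rcases Nat.eq_zero_or_pos j with h0 | h1
    · subst h0; simpa using hFsucc k
    · have hj' : j - 1 ∈ Finset.range (min k N + 1) := by
        rw [Finset.mem_range]; omega
      have hle := Finset.le_sup' (fun j => f (x (k - j))) hj'
      rw [← hfl k] at hle
      have hidx : k + 1 - j = k - (j - 1) := by omega
      rw [hidx]
      exact hle
  have hanti : Antitone fl := antitone_nat_of_succ_le hflanti
  have hfl0 : fl 0 = F 0 := by rw [hfl]; simp; rfl
  -- compact level set
  set K : Set (EuclideanSpace ℝ (Fin n)) := {y | f y ≤ f (x 0)} with hKdef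
  have hKclosed : IsClosed K := isClosed_le hf.continuous continuous_const
  have hKcompact : IsCompact K := Metric.isCompact_of_isClosed_isBounded hKclosed H1
  have hxK : ∀ k, x k ∈ K := by
    intro k
    have h1 : F k ≤ F 0 := le_trans (hFfl k) (by rw [← hfl0]; exact hanti (Nat.zero_le k))
    exact h1
  obtain ⟨z, hzK, hzmin⟩ := hKcompact.exists_isMinOn ⟨x 0, le_refl (f (x 0))⟩
    hf.continuous.continuousOn
  have hbdd : BddBelow (Set.range fl) := by
    refine ⟨f z, ?_⟩
    rintro _ ⟨k, rfl⟩
    exact le_trans (hzmin (hxK k)) (hFfl k)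
  set l : ℝ := ⨅ k, fl k with hl
  have hfltend : Tendsto fl atTop (nhds l) := tendsto_atTop_ciInf hanti hbdd
  -- argmax selection
  have hsel : ∀ k, ∃ j, j ∈ Finset.range (min k N + 1) ∧ fl k = f (x (k - j)) := by
    intro k
    obtain ⟨j, hj, he⟩ := Finset.exists_mem_eq_sup'
      (Finset.nonempty_range_add_one (n := min k N)) (fun j => f (x (k - j)))
    exact ⟨j, hj, by rw [hfl]; exact he⟩
  choose jc hjc hjceq using hsel
  set L : ℕ → ℕ := fun k => k - jc k with hLdef
  have hLge : ∀ k, k - N ≤ L k := by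
    intro k
    have := Finset.mem_range.1 (hjc k)
    simp only [hLdef]
    omega
  have hLle : ∀ k, L k ≤ k := fun k => Nat.sub_le _ _
  have hLF : ∀ k, F (L k) = fl k := fun k => (hjceq k).symm
  have hLtop : Tendsto L atTop atTop := by
    apply tendsto_atTop.2
    intro b
    filter_upwards [eventually_ge_atTop (b + N)] with k hk
    have := hLge k; omega
  set Δ : ℕ → ℝ := fun m => ‖x (m + 1) - x m‖ with hΔdef
  have hΔnn : ∀ m, 0 ≤ Δ m := fun m => norm_nonneg _
  have hΔle : ∀ m, Δ m ≤ c₂ * (α m * ‖g (x m)‖) := by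
    intro m
    have h1 : x (m + 1) - x m = α m • d m := by rw [hx m]; abel
    calc Δ m = α m * ‖d m‖ := by
          simp only [hΔdef]
          rw [h1, norm_smul, Real.norm_eq_abs, abs_of_pos (hαpos m)]
      _ ≤ α m * (c₂ * ‖g (x m)‖) := mul_le_mul_of_nonneg_left (hH3 m).2 (hαpos m).le
      _ = c₂ * (α m * ‖g (x m)‖) := by ring
  -- the key step
  have step : ∀ τ : ℕ → ℕ, Tendsto τ atTop atTop →
      Tendsto (fun k => F (τ k)) atTop (nhds l) →
      Tendsto (fun k => Δ (τ k - 1)) atTop (nhds 0) ∧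
      Tendsto (fun k => F (τ k - 1)) atTop (nhds l) := by
    intro τ hτtop hτF
    have hev1 : ∀ᶠ k in atTop, 1 ≤ τ k := hτtop.eventually_ge_atTop 1
    have hmtop : Tendsto (fun k => τ k - 1) atTop atTop := by
      apply tendsto_atTop.2
      intro b
      filter_upwards [hτtop.eventually_ge_atTop (b + 1)] with k hk
      omega
    have h2 : Tendsto (fun k => fl (τ k - 1) - F (τ k)) atTop (nhds 0) := by
      have h1 : Tendsto (fun k => fl (τ k - 1)) atTop (nhds l) := hfltend.comp hmtop
      simpa using h1.sub hτF
    have hcu : Tendsto (fun k => c * (α (τ k - 1) * ‖g (x (τ k - 1))‖ ^ 2)) atTop (nhds 0) := by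
      apply tendsto_of_tendsto_of_tendsto_of_le_of_le' tendsto_const_nhds h2
      · filter_upwards with k
        exact mul_nonneg hc.le (mul_nonneg (hαpos _).le (sq_nonneg _))
      · filter_upwards [hev1] with k hk
        have harm := hArm' (τ k - 1)
        rw [show τ k - 1 + 1 = τ k by omega] at harm
        linarith
    have hutend : Tendsto (fun k => α (τ k - 1) * ‖g (x (τ k - 1))‖ ^ 2) atTop (nhds 0) := by
      have heq : (fun k => α (τ k - 1) * ‖g (x (τ k - 1))‖ ^ 2)
          = fun k => c⁻¹ * (c * (α (τ k - 1) * ‖g (x (τ k - 1))‖ ^ 2)) := by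
        funext k; rw [← mul_assoc, inv_mul_cancel₀ hc.ne', one_mul]
      rw [heq]
      simpa using hcu.const_mul c⁻¹
    have hΔtend : Tendsto (fun k => Δ (τ k - 1)) atTop (nhds 0) := by
      have hup : Tendsto (fun k => c₂ * Real.sqrt (s * (α (τ k - 1) * ‖g (x (τ k - 1))‖ ^ 2)))
          atTop (nhds 0) := by
        have h1 : Tendsto (fun k => s * (α (τ k - 1) * ‖g (x (τ k - 1))‖ ^ 2)) atTop (nhds 0) := by
          simpa using hutend.const_mul s
        have h2' := (Real.continuous_sqrt.tendsto 0).comp h1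
        have h3 := h2'.const_mul c₂
        simpa using h3
      apply tendsto_of_tendsto_of_tendsto_of_le_of_le' tendsto_const_nhds hup
      · filter_upwards with k; exact hΔnn _
      · filter_upwards with k
        have h1 := hΔle (τ k - 1)
        have hkey : (α (τ k - 1) * ‖g (x (τ k - 1))‖) ^ 2
            ≤ s * (α (τ k - 1) * ‖g (x (τ k - 1))‖ ^ 2) := by
          have h0 : α (τ k - 1) * (α (τ k - 1) * ‖g (x (τ k - 1))‖ ^ 2)
              ≤ s * (α (τ k - 1) * ‖g (x (τ k - 1))‖ ^ 2) :=
            mul_le_mul_of_nonneg_right (hαs _) (mul_nonneg (hαpos _).le (sq_nonneg _))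
          nlinarith [h0]
        have h2' : α (τ k - 1) * ‖g (x (τ k - 1))‖
            ≤ Real.sqrt (s * (α (τ k - 1) * ‖g (x (τ k - 1))‖ ^ 2)) := by
          have := Real.sqrt_le_sqrt hkey
          rwa [Real.sqrt_sq (mul_nonneg (hαpos _).le (norm_nonneg _))] at this
        have hc₂0 : (0 : ℝ) ≤ c₂ := by linarith
        calc Δ (τ k - 1) ≤ c₂ * (α (τ k - 1) * ‖g (x (τ k - 1))‖) := h1
          _ ≤ c₂ * Real.sqrt (s * (α (τ k - 1) * ‖g (x (τ k - 1))‖ ^ 2)) :=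
            mul_le_mul_of_nonneg_left h2' hc₂0
    have hFm : Tendsto (fun k => F (τ k - 1)) atTop (nhds l) := by
      apply uc_transfer hKcompact hf.continuous.continuousOn
        (fun k => hxK (τ k - 1)) (fun k => hxK (τ k)) ?_ hτF
      have heq : (fun k => dist (x (τ k - 1)) (x (τ k))) =ᶠ[atTop] fun k => Δ (τ k - 1) := by
        filter_upwards [hev1] with k hk
        have hs1 : τ k = (τ k - 1) + 1 := by omega
        calc dist (x (τ k - 1)) (x (τ k)) = ‖x (τ k) - x (τ k - 1)‖ := by
              rw [dist_eq_norm, norm_sub_rev]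
          _ = Δ (τ k - 1) := by simp only [hΔdef]; rw [← hs1]
      exact hΔtend.congr' heq.symm
    exact ⟨hΔtend, hFm⟩
  have hτitop : ∀ i : ℕ, Tendsto (fun k => L k - i) atTop atTop := by
    intro i
    apply tendsto_atTop.2
    intro b
    filter_upwards [hLtop.eventually_ge_atTop (b + i)] with k hk
    omega
  have main : ∀ j : ℕ, Tendsto (fun k => F (L k - j)) atTop (nhds l) ∧
      Tendsto (fun k => Δ (L k - j - 1)) atTop (nhds 0) := by
    intro j
    induction j with
    | zero =>
      have hF0 : Tendsto (fun k => F (L k - 0)) atTop (nhds l) := by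
        simp only [Nat.sub_zero]
        exact hfltend.congr fun k => (hLF k).symm
      have hst := step (fun k => L k - 0) (by simpa using hLtop) hF0
      exact ⟨hF0, hst.1⟩
    | succ j ih =>
      have hFs : Tendsto (fun k => F (L k - (j + 1))) atTop (nhds l) := by
        have := (step (fun k => L k - j) (hτitop j) ih.1).2
        simpa only [Nat.sub_sub] using this
      have hΔs := (step (fun k => L k - (j + 1)) (hτitop (j + 1)) hFs).1
      exact ⟨hFs, hΔs⟩
  -- final step
  have hFsumΔ : ∀ k, dist (x (k + 1)) (x (L (k + N + 1)))
      ≤ ∑ j ∈ Finset.range N, Δ (L (k + N + 1) - j - 1) := by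
    intro k
    have hL1 : k + 1 ≤ L (k + N + 1) := by have := hLge (k + N + 1); omega
    have hL2 : L (k + N + 1) ≤ k + N + 1 := hLle _
    set m := L (k + N + 1) - (k + 1) with hm
    have hmN : m ≤ N := by omega
    have htel := telescope_norm x (k + 1) m
    rw [show k + 1 + m = L (k + N + 1) by omega] at htel
    have hre : ∑ j ∈ Finset.range m, Δ (L (k + N + 1) - j - 1)
        = ∑ i ∈ Finset.range m, Δ (k + 1 + i) := by
      rw [← Finset.sum_range_reflect (fun i => Δ (k + 1 + i)) m]
      refine Finset.sum_congr rfl fun j hj => ?_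
      rw [Finset.mem_range] at hj
      congr 1
      omega
    calc dist (x (k + 1)) (x (L (k + N + 1)))
        = ‖x (L (k + N + 1)) - x (k + 1)‖ := by rw [dist_eq_norm, norm_sub_rev]
      _ ≤ ∑ i ∈ Finset.range m, ‖x (k + 1 + i + 1) - x (k + 1 + i)‖ := htel
      _ = ∑ j ∈ Finset.range m, Δ (L (k + N + 1) - j - 1) := by
          rw [hre]
      _ ≤ ∑ j ∈ Finset.range N, Δ (L (k + N + 1) - j - 1) :=
          Finset.sum_le_sum_of_subset_of_nonneg
            (Finset.range_subset_range.2 hmN) (fun j _ _ => hΔnn _)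
  have hshift : Tendsto (fun k : ℕ => k + (N + 1)) atTop atTop := tendsto_add_atTop_nat (N + 1)
  have hSt : Tendsto (fun k => ∑ j ∈ Finset.range N, Δ (L (k + N + 1) - j - 1))
      atTop (nhds 0) := by
    have h1 : Tendsto (fun k => ∑ j ∈ Finset.range N, Δ (L (k + N + 1) - j - 1))
        atTop (nhds (∑ j ∈ Finset.range N, (0 : ℝ))) := by
      apply tendsto_finset_sum
      intro j _
      have := (main j).2.comp hshift
      simpa [Function.comp_def, add_assoc] using this
    simpa using h1
  have hF1 : Tendsto (fun k => F (k + 1)) atTop (nhds l) := by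
    apply uc_transfer hKcompact hf.continuous.continuousOn
      (fun k => hxK (k + 1)) (fun k => hxK (L (k + N + 1))) ?_ ?_
    · apply tendsto_of_tendsto_of_tendsto_of_le_of_le' tendsto_const_nhds hSt
      · filter_upwards with k; exact dist_nonneg
      · filter_upwards with k; exact hFsumΔ k
    · have h1 : Tendsto (fun k => fl (k + N + 1)) atTop (nhds l) := by
        have := hfltend.comp hshift
        simpa [Function.comp_def, add_assoc] using this
      exact h1.congr fun k => (hLF _).symm
  have hFtend : Tendsto F atTop (nhds l) := by
    have := (tendsto_add_atTop_iff_nat 1).1 hF1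
    exact this
  have hTtend : Tendsto T atTop (nhds l) :=
    tendsto_of_tendsto_of_tendsto_of_le_of_le hFtend hfltend hFT hTfl
  exact ⟨l, hTtend, hFtend⟩
end

section
/- Let n ≥ 1 and let f : ℝⁿ → ℝ be continuously differentiable with gradient g. Fix s ∈ (0,1], ρ ∈ (0,1), σ ∈ (0,1/2), an integer N ≥ 1, and weights η_k ∈ [0,1). Let x_{k+1} = x_k + α_k d_k, where α_k = s ρ^{j_k} and j_k is the smallest j ∈ ℕ with f(x_k + s ρ^j d_k) ≤ T_k + σ s ρ^j ⟨g(x_k), d_k⟩; here f_k = f(x_k), f_{l(k)} = max_{0≤j≤min(k,N)} f_{k−j}, T̄_0 = f_0, T̄_k = (1−η_{k−1}) f_k + η_{k−1} T̄_{k−1} for 1 ≤ k ≤ N−1, T̄_k = Σ_{j=0}^{N−1}(η_{k−1}⋯η_{k−j})(1−η_{k−j−1}) f_{k−j} + (η_{k−1}⋯η_{k−N}) f_{k−N} for k ≥ N, and T_k = f_{l(k)} for k ≤ N−1, T_k = max{T̄_k, f_k} for k ≥ N. Assume (H1) the level set L(x_0) = {x ∈ ℝⁿ : f(x) ≤ f(x_0)}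 is bounded; (H2) there exist an open convex set C ⊇ L(x_0) and L > 0 with ‖g(x) − g(y)‖ ≤ L‖x − y‖ for all x, y ∈ C; and (H3) there exist 0 < c₁ < 1 < c₂ with ⟨g(x_k), d_k⟩ ≤ −c₁‖g(x_k)‖² and ‖d_k‖ ≤ c₂‖g(x_k)‖ for all k. Then lim_{k→∞} ‖g(x_k)‖ = 0. -/
open Set Filter Metric Topology

/-- Quadratic upper bound (descent lemma) for a function with Lipschitz gradient
along a segment. -/
lemma nmls_descent {E : Type*} [NormedAddCommGroup E] [InnerProductSpace ℝ E] [CompleteSpace E]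
    (f : E → ℝ) (g : E → E) (hg : ∀ y, HasGradientAt f (g y) y)
    (L : ℝ) (x v : E) (C : Set E)
    (hseg : ∀ t : ℝ, t ∈ Set.Icc (0:ℝ) 1 → x + t • v ∈ C)
    (hlip : ∀ a ∈ C, ∀ b ∈ C, ‖g a - g b‖ ≤ L * ‖a - b‖) :
    f (x + v) ≤ f x + (inner ℝ (g x) v : ℝ) + L / 2 * ‖v‖ ^ 2 := by
  have hφ : ∀ t : ℝ, HasDerivAt (fun t : ℝ => f (x + t • v)) (inner ℝ (g (x + t • v)) v : ℝ) t := by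
    intro t
    have hc : HasDerivAt (fun t : ℝ => x + t • v) v t := by
      simpa using ((hasDerivAt_id t).smul_const v).const_add x
    have := ((hg (x + t • v)).hasFDerivAt).comp_hasDerivAt t hc
    simp only [InnerProductSpace.toDual_apply_apply] at this
    exact this
  set ψ : ℝ → ℝ := fun t => f (x + t • v) - t * (inner ℝ (g x) v : ℝ) - L / 2 * t ^ 2 * ‖v‖ ^ 2 with hψ
  have hψ' : ∀ t : ℝ, HasDerivAt ψ
      ((inner ℝ (g (x + t • v)) v : ℝ) - (inner ℝ (g x) v : ℝ) - L * t * ‖v‖ ^ 2) t := by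
    intro t
    have h1 : HasDerivAt (fun t : ℝ => t * (inner ℝ (g x) v : ℝ)) (inner ℝ (g x) v : ℝ) t := by
      simpa using (hasDerivAt_id t).mul_const (inner ℝ (g x) v : ℝ)
    have h2 : HasDerivAt (fun t : ℝ => L / 2 * t ^ 2 * ‖v‖ ^ 2) (L * t * ‖v‖ ^ 2) t := by
      have := ((hasDerivAt_pow 2 t).const_mul (L / 2)).mul_const (‖v‖ ^ 2)
      exact this.congr_deriv (by ring)
    exact ((hφ t).sub h1).sub h2
  have key : ψ 1 ≤ ψ 0 := by
    have hanti : AntitoneOn ψ (Icc (0:ℝ) 1) := by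
      apply antitoneOn_of_deriv_nonpos (convex_Icc 0 1)
      · exact fun t _ => ((hψ' t).continuousAt).continuousWithinAt
      · intro t ht
        exact ((hψ' t).differentiableAt).differentiableWithinAt
      · intro t ht
        rw [interior_Icc] at ht
        rw [(hψ' t).deriv]
        have h1 : (inner ℝ (g (x + t • v)) v : ℝ) - (inner ℝ (g x) v : ℝ)
            = (inner ℝ (g (x + t • v) - g x) v : ℝ) := by rw [inner_sub_left]
        have h2 : (inner ℝ (g (x + t • v) - g x) v : ℝ) ≤ ‖g (x + t • v) - g x‖ * ‖v‖ :=
          real_inner_le_norm _ _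
        have h3 : ‖g (x + t • v) - g x‖ ≤ L * (t * ‖v‖) := by
          have h4 := hlip _ (hseg t ⟨le_of_lt ht.1, le_of_lt ht.2⟩) _ (hseg 0 (by norm_num))
          have h5 : x + (0:ℝ) • v = x := by simp
          rw [h5] at h4
          have h6 : ‖x + t • v - x‖ = t * ‖v‖ := by
            simp [norm_smul, abs_of_nonneg (le_of_lt ht.1)]
          rw [h6] at h4; exact h4
        have h4 : (inner ℝ (g (x + t • v) - g x) v : ℝ) ≤ L * t * ‖v‖ ^ 2 := by
          calc (inner ℝ (g (x + t • v) - g x) v : ℝ) ≤ ‖g (x + t • v) - g x‖ * ‖v‖ := h2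
          _ ≤ L * (t * ‖v‖) * ‖v‖ := mul_le_mul_of_nonneg_right h3 (norm_nonneg v)
          _ = L * t * ‖v‖ ^ 2 := by ring
        rw [h1]; linarith
    exact hanti (by norm_num) (by norm_num) (by norm_num)
  have hfin : f (x + (1:ℝ) • v) - 1 * (inner ℝ (g x) v : ℝ) - L/2 * 1^2 * ‖v‖^2
      ≤ f (x + (0:ℝ) • v) - 0 * (inner ℝ (g x) v : ℝ) - L/2 * 0^2 * ‖v‖^2 := key
  simp only [one_smul, zero_smul, add_zero, one_mul, zero_mul, one_pow] at hfin
  nlinarith [hfin]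

/-- Squeeze: if `0 ≤ u` and `σ * u ≤ b` eventually with `b → 0` and `σ > 0`, then `u → 0`. -/
lemma nmls_tendsto_zero_of_le {w b : ℕ → ℝ} {σ : ℝ} (hσ : 0 < σ) (h0 : ∀ k, 0 ≤ w k)
    (hb : Tendsto b atTop (𝓝 0)) (hle : ∀ᶠ k in atTop, σ * w k ≤ b k) :
    Tendsto w atTop (𝓝 0) := by
  have h1 : Tendsto (fun k => σ * w k) atTop (𝓝 0) := by
    apply tendsto_of_tendsto_of_tendsto_of_le_of_le' tendsto_const_nhds hb
    · exact Eventually.of_forall fun k => mul_nonneg hσ.le (h0 k)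
    · exact hle
  have h2 := h1.const_mul σ⁻¹
  simp only [mul_zero] at h2
  refine h2.congr fun k => ?_
  field_simp

/-- If `u ≥ 0` and `u² ≤ c * v` with `v → 0`, then `u → 0`. -/
lemma nmls_sqrt_squeeze {u v : ℕ → ℝ} (c : ℝ) (h0 : ∀ k, 0 ≤ u k)
    (hv : Tendsto v atTop (𝓝 0)) (hle : ∀ᶠ k in atTop, u k ^ 2 ≤ c * v k) :
    Tendsto u atTop (𝓝 0) := by
  have hs : Tendsto (fun k => Real.sqrt (c * v k)) atTop (𝓝 0) := by
    have := (hv.const_mul c).sqrt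
    simpa using this
  apply tendsto_of_tendsto_of_tendsto_of_le_of_le' tendsto_const_nhds hs
  · exact Eventually.of_forall h0
  · filter_upwards [hle] with k hk
    have hcv : 0 ≤ c * v k := le_trans (sq_nonneg _) hk
    exact (Real.le_sqrt (h0 k) hcv).2 hk

set_option maxHeartbeats 2000000 in
/-- Theorem 1 (global convergence) for Algorithm NMLS with the nonmonotone
term (11): under (H1)–(H3), the gradients along the iterates of the nonmonotone
Armijo-type line search tend to zero. -/
theorem nmls_gradient_tendsto_zero (n : ℕ) (hn : 1 ≤ n)
    (f : EuclideanSpace ℝ (Fin n) → ℝ)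
    (g : EuclideanSpace ℝ (Fin n) → EuclideanSpace ℝ (Fin n))
    (hf : ContDiff ℝ 1 f) (hg : ∀ y, HasGradientAt f (g y) y)
    (s ρ σ : ℝ) (hs : s ∈ Set.Ioc (0 : ℝ) 1) (hρ : ρ ∈ Set.Ioo (0 : ℝ) 1)
    (hσ : σ ∈ Set.Ioo (0 : ℝ) (1 / 2))
    (N : ℕ) (hN : 1 ≤ N) (η : ℕ → ℝ) (hη : ∀ k, η k ∈ Set.Ico (0 : ℝ) 1)
    (x d : ℕ → EuclideanSpace ℝ (Fin n)) (α : ℕ → ℝ) (jk : ℕ → ℕ)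
    (Tbar T fl : ℕ → ℝ)
    (hfl : ∀ k, fl k = (Finset.range (min k N + 1)).sup'
      Finset.nonempty_range_add_one (fun j => f (x (k - j))))
    (hT0 : Tbar 0 = f (x 0))
    (hTrec : ∀ k, 1 ≤ k → k ≤ N - 1 →
      Tbar k = (1 - η (k - 1)) * f (x k) + η (k - 1) * Tbar (k - 1))
    (hTsum : ∀ k, N ≤ k → Tbar k =
      (∑ j ∈ Finset.range N,
          (∏ i ∈ Finset.range j, η (k - 1 - i)) * (1 - η (k - j - 1)) * f (x (k - j)))
        + (∏ i ∈ Finset.range N, η (k - 1 - i)) * f (x (k - N)))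
    (hTlt : ∀ k, k ≤ N - 1 → T k = fl k)
    (hTge : ∀ k, N ≤ k → T k = max (Tbar k) (f (x k)))
    (hjk : ∀ k, IsLeast {j : ℕ | f (x k + (s * ρ ^ j) • d k) ≤
      T k + σ * (s * ρ ^ j) * (inner ℝ (g (x k)) (d k) : ℝ)} (jk k))
    (hα : ∀ k, α k = s * ρ ^ (jk k))
    (hx : ∀ k, x (k + 1) = x k + α k • d k)
    (H1 : Bornology.IsBounded {y : EuclideanSpace ℝ (Fin n) | f y ≤ f (x 0)})
    (H2 : ∃ C : Set (EuclideanSpace ℝ (Fin n)), IsOpen C ∧ Convex ℝ C ∧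
      {y : EuclideanSpace ℝ (Fin n) | f y ≤ f (x 0)} ⊆ C ∧
      ∃ L > (0 : ℝ), ∀ a ∈ C, ∀ b ∈ C, ‖g a - g b‖ ≤ L * ‖a - b‖)
    (H3 : ∃ c₁ c₂ : ℝ, 0 < c₁ ∧ c₁ < 1 ∧ 1 < c₂ ∧
      ∀ k, (inner ℝ (g (x k)) (d k) : ℝ) ≤ -c₁ * ‖g (x k)‖ ^ 2 ∧
        ‖d k‖ ≤ c₂ * ‖g (x k)‖) :
    Filter.Tendsto (fun k => ‖g (x k)‖) Filter.atTop (nhds 0) := by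
  obtain ⟨hs0, hs1⟩ := hs
  obtain ⟨hρ0, hρ1⟩ := hρ
  obtain ⟨hσ0, hσh⟩ := hσ
  obtain ⟨C, hCopen, hCconv, hLC, Lip, hLip0, hLip⟩ := H2
  obtain ⟨c₁, c₂, hc₁0, hc₁1, hc₂, hcd⟩ := H3
  set Lev : Set (EuclideanSpace ℝ (Fin n)) := {y | f y ≤ f (x 0)} with hLev
  set p : ℕ → ℝ := fun k => (inner ℝ (g (x k)) (d k) : ℝ) with hp
  -- basic facts
  have hα_pos : ∀ k, 0 < α k := by
    intro k; rw [hα k]; positivity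
  have hα_le1 : ∀ k, α k ≤ 1 := by
    intro k; rw [hα k]
    calc s * ρ ^ jk k ≤ 1 * 1 ^ jk k :=
      mul_le_mul hs1 (pow_le_pow_left₀ hρ0.le hρ1.le _) (by positivity) one_pos.le
    _ = 1 := by simp
  have hp_le : ∀ k, p k ≤ -c₁ * ‖g (x k)‖ ^ 2 := fun k => (hcd k).1
  have hp_nonpos : ∀ k, p k ≤ 0 := by
    intro k
    have := hp_le k
    nlinarith [sq_nonneg ‖g (x k)‖]
  have harmijo : ∀ k, f (x (k + 1)) ≤ T k + σ * α k * p k := by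
    intro k
    have h1 := (hjk k).1
    simp only [Set.mem_setOf_eq] at h1
    rw [hx k, hα k]
    exact h1
  -- fl facts
  have hfl_ge : ∀ k, f (x k) ≤ fl k := by
    intro k
    rw [hfl k]
    have h0 : 0 ∈ Finset.range (min k N + 1) := by simp
    have := Finset.le_sup' (fun j => f (x (k - j))) h0
    simpa only [Nat.sub_zero] using this
  have hfl0 : fl 0 = f (x 0) := by
    rw [hfl 0]
    simp
  -- T is between f(x k) and fl k
  have hT_ge : ∀ k, f (x k) ≤ T k := by
    intro k
    rcases lt_or_ge k N with hk | hk
    · rw [hTlt k (by omega)]; exact hfl_ge k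
    · rw [hTge k hk]; exact le_max_right _ _
  have hTbar_le : ∀ k, N ≤ k → Tbar k ≤ fl k := by
    intro k hk
    have hmin : min k N = N := min_eq_right hk
    have hM : ∀ j, j ≤ N → f (x (k - j)) ≤ fl k := by
      intro j hj
      rw [hfl k]
      exact Finset.le_sup' (fun j => f (x (k - j))) (by simp [hmin]; omega)
    have hidx : ∀ j : ℕ, k - j - 1 = k - 1 - j := fun j => Nat.sub_right_comm k j 1
    have hP0 : ∀ j : ℕ, 0 ≤ ∏ i ∈ Finset.range j, η (k - 1 - i) :=
      fun j => Finset.prod_nonneg fun i _ => (hη _).1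
    have hcoef : ∀ j : ℕ, 0 ≤ (∏ i ∈ Finset.range j, η (k - 1 - i)) * (1 - η (k - 1 - j)) := by
      intro j
      apply mul_nonneg (hP0 j)
      have := (hη (k - 1 - j)).2
      linarith
    have hsum : ∑ j ∈ Finset.range N, (∏ i ∈ Finset.range j, η (k - 1 - i)) * (1 - η (k - 1 - j))
        = 1 - ∏ i ∈ Finset.range N, η (k - 1 - i) := by
      have key : ∀ j ∈ Finset.range N,
          (∏ i ∈ Finset.range j, η (k - 1 - i)) * (1 - η (k - 1 - j)) =
          (∏ i ∈ Finset.range j, η (k - 1 - i)) - ∏ i ∈ Finset.range (j + 1), η (k - 1 - i) := by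
        intro j _
        rw [Finset.prod_range_succ]
        ring
      rw [Finset.sum_congr rfl key, Finset.sum_range_sub' (fun j => ∏ i ∈ Finset.range j, η (k - 1 - i)) N]
      simp
    rw [hTsum k hk]
    simp only [hidx]
    calc (∑ j ∈ Finset.range N,
          (∏ i ∈ Finset.range j, η (k - 1 - i)) * (1 - η (k - 1 - j)) * f (x (k - j)))
        + (∏ i ∈ Finset.range N, η (k - 1 - i)) * f (x (k - N))
        ≤ (∑ j ∈ Finset.range N,
          (∏ i ∈ Finset.range j, η (k - 1 - i)) * (1 - η (k - 1 - j)) * fl k)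
        + (∏ i ∈ Finset.range N, η (k - 1 - i)) * fl k := by
          apply add_le_add
          · apply Finset.sum_le_sum
            intro j hj
            exact mul_le_mul_of_nonneg_left (hM j (by simp at hj; omega)) (hcoef j)
          · exact mul_le_mul_of_nonneg_left (hM N le_rfl) (hP0 N)
    _ = ((1 - ∏ i ∈ Finset.range N, η (k - 1 - i)) + ∏ i ∈ Finset.range N, η (k - 1 - i)) * fl k := by
          rw [← Finset.sum_mul, hsum]
          ring
    _ = fl k := by ring
  have hT_le : ∀ k, T k ≤ fl k := by
    intro k
    rcases lt_or_ge k N with hk | hk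
    · rw [hTlt k (by omega)]
    · rw [hTge k hk]
      exact max_le (hTbar_le k hk) (hfl_ge k)
  -- key recursion
  have hnext : ∀ k, f (x (k + 1)) ≤ fl k + σ * α k * p k :=
    fun k => le_trans (harmijo k) (by linarith [hT_le k])
  have hstep_le : ∀ k, f (x (k + 1)) ≤ fl k := by
    intro k
    have h1 := hnext k
    have h2 : σ * α k * p k ≤ 0 :=
      mul_nonpos_of_nonneg_of_nonpos (mul_nonneg hσ0.le (hα_pos k).le) (hp_nonpos k)
    linarith
  -- fl is antitone
  have hfl_succ : ∀ k, fl (k + 1) ≤ fl k := by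
    intro k
    rw [hfl (k + 1)]
    apply Finset.sup'_le
    intro j hj
    simp only [Finset.mem_range] at hj
    match j with
    | 0 => simpa using hstep_le k
    | (j' + 1) =>
      have he : k + 1 - (j' + 1) = k - j' := by omega
      rw [he, hfl k]
      exact Finset.le_sup' (fun j => f (x (k - j))) (by simp; omega)
  have hfl_anti : Antitone fl := antitone_nat_of_succ_le hfl_succ
  -- all iterates in the level set
  have hxLev : ∀ k, x k ∈ Lev := by
    intro k
    have : fl k ≤ fl 0 := hfl_anti (Nat.zero_le k)
    simp only [hLev, Set.mem_setOf_eq]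
    calc f (x k) ≤ fl k := hfl_ge k
    _ ≤ fl 0 := this
    _ = f (x 0) := hfl0
  -- the level set is compact and nonempty
  have hLev_closed : IsClosed Lev := IsClosed.preimage hf.continuous isClosed_Iic
  have hLev_cpt : IsCompact Lev := Metric.isCompact_of_isClosed_isBounded hLev_closed H1
  have hLev_ne : Lev.Nonempty := ⟨x 0, by simp [hLev]⟩
  -- f is bounded below on Lev
  obtain ⟨z, hzLev, hzmin⟩ := hLev_cpt.exists_isMinOn hLev_ne hf.continuous.continuousOn
  -- fl is bounded below, converges
  have hfl_bdd : BddBelow (Set.range fl) := by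
    refine ⟨f z, ?_⟩
    rintro _ ⟨k, rfl⟩
    calc f z ≤ f (x k) := hzmin (hxLev k)
    _ ≤ fl k := hfl_ge k
  set fstar : ℝ := ⨅ k, fl k with hfstar
  have hfl_tendsto : Tendsto fl atTop (𝓝 fstar) := tendsto_atTop_ciInf hfl_anti hfl_bdd
  -- choose maximizing index l k
  have hex : ∀ k, ∃ j, j ∈ Finset.range (min k N + 1) ∧ fl k = f (x (k - j)) := by
    intro k
    rw [hfl k]
    exact Finset.exists_mem_eq_sup' _ _
  choose jm hjm1 hjm2 using hex
  set l : ℕ → ℕ := fun k => k - jm k with hl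
  have hjmN : ∀ k, jm k ≤ N := by
    intro k
    have := hjm1 k
    simp only [Finset.mem_range] at this
    omega
  have hl_le : ∀ k, l k ≤ k := fun k => Nat.sub_le _ _
  have hl_ge : ∀ k, k ≤ l k + N := by
    intro k
    have := hjmN k
    simp only [hl]
    omega
  have hl_eq : ∀ k, f (x (l k)) = fl k := fun k => (hjm2 k).symm
  -- quantities
  set w : ℕ → ℝ := fun k => α k * (-(p k)) with hw
  set δ : ℕ → ℝ := fun k => α k * ‖d k‖ with hδ
  have hw_nonneg : ∀ k, 0 ≤ w k := by
    intro k
    exact mul_nonneg (hα_pos k).le (by linarith [hp_nonpos k])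
  have hδ_nonneg : ∀ k, 0 ≤ δ k := fun k => mul_nonneg (hα_pos k).le (norm_nonneg _)
  have hw_le : ∀ k, σ * w k ≤ fl k - f (x (k + 1)) := by
    intro k
    have := hnext k
    simp only [hw]
    nlinarith [this]
  have hδ_sq : ∀ k, δ k ^ 2 ≤ c₂ ^ 2 / c₁ * w k := by
    intro k
    have h1 : ‖d k‖ ^ 2 ≤ c₂ ^ 2 * ‖g (x k)‖ ^ 2 := by
      nlinarith [(hcd k).2, norm_nonneg (d k), norm_nonneg (g (x k))]
    have h2 : c₁ * ‖g (x k)‖ ^ 2 ≤ -(p k) := by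
      have := hp_le k; linarith
    have h3 : α k ^ 2 ≤ α k := by
      nlinarith [hα_pos k, hα_le1 k]
    have h4 : δ k ^ 2 = α k ^ 2 * ‖d k‖ ^ 2 := by simp only [hδ]; ring
    rw [h4, div_mul_eq_mul_div, le_div_iff₀ hc₁0]
    calc α k ^ 2 * ‖d k‖ ^ 2 * c₁ ≤ α k * (c₂ ^ 2 * ‖g (x k)‖ ^ 2) * c₁ := by
          apply mul_le_mul_of_nonneg_right _ hc₁0.le
          apply mul_le_mul h3 h1 (by positivity) (hα_pos k).le
    _ = c₂ ^ 2 * (α k * (c₁ * ‖g (x k)‖ ^ 2)) := by ring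
    _ ≤ c₂ ^ 2 * (α k * (-(p k))) := by
          apply mul_le_mul_of_nonneg_left _ (by positivity)
          exact mul_le_mul_of_nonneg_left h2 (hα_pos k).le
    _ = c₂ ^ 2 * w k := by simp only [hw]
  have hδ_norm : ∀ k, ‖x (k + 1) - x k‖ = δ k := by
    intro k
    rw [hx k]
    simp only [hδ, add_sub_cancel_left, norm_smul, Real.norm_eq_abs,
      abs_of_pos (hα_pos k)]
  -- uniform continuity of f on Lev
  have hUC := hLev_cpt.uniformContinuousOn_of_continuous hf.continuous.continuousOn
  rw [Metric.uniformContinuousOn_iff] at hUC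
  -- the lag induction
  have claim : ∀ j : ℕ, Tendsto (fun k => f (x (l k - j))) atTop (𝓝 fstar) := by
    intro j
    induction j with
    | zero =>
      simp only [Nat.sub_zero]
      exact hfl_tendsto.congr fun k => (hl_eq k).symm
    | succ j ih =>
      set m : ℕ → ℕ := fun k => l k - j - 1 with hm
      have hm_ge : ∀ k, k - (N + j + 1) ≤ m k := by
        intro k
        have h1 := hl_ge k
        simp only [hm]
        omega
      have hm_top : Tendsto m atTop atTop := by
        apply tendsto_atTop_mono hm_ge
        exact tendsto_sub_atTop_nat (N + j + 1)
      have hev : ∀ᶠ k in atTop, l k - j = m k + 1 := by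
        filter_upwards [eventually_ge_atTop (N + j + 1)] with k hk
        have := hl_ge k
        simp only [hm]
        omega
      have hA : Tendsto (fun k => fl (m k)) atTop (𝓝 fstar) := hfl_tendsto.comp hm_top
      have hB : Tendsto (fun k => f (x (m k + 1))) atTop (𝓝 fstar) := by
        apply ih.congr' (hev.mono fun k hk => by rw [← hk])
      have hdiff : Tendsto (fun k => fl (m k) - f (x (m k + 1))) atTop (𝓝 0) := by
        have := hA.sub hB
        simpa using this
      have hwm : Tendsto (fun k => w (m k)) atTop (𝓝 0) :=
        nmls_tendsto_zero_of_le hσ0 (fun k => hw_nonneg (m k)) hdiff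
          (Eventually.of_forall fun k => hw_le (m k))
      have hδm : Tendsto (fun k => δ (m k)) atTop (𝓝 0) :=
        nmls_sqrt_squeeze (c₂ ^ 2 / c₁) (fun k => hδ_nonneg (m k)) hwm
          (Eventually.of_forall fun k => hδ_sq (m k))
      -- f (x (m k)) - f (x (m k + 1)) → 0 by uniform continuity
      have hfd : Tendsto (fun k => f (x (m k)) - f (x (m k + 1))) atTop (𝓝 0) := by
        rw [Metric.tendsto_nhds]
        intro ε hε
        obtain ⟨δ₀, hδ₀, hδ₀'⟩ := hUC ε hε
        have hsmall : ∀ᶠ k in atTop, δ (m k) < δ₀ := by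
          have := Metric.tendsto_nhds.1 hδm δ₀ hδ₀
          simpa [Real.dist_eq, abs_of_nonneg (hδ_nonneg _)] using this
        filter_upwards [hsmall] with k hk
        have hd1 : dist (x (m k)) (x (m k + 1)) < δ₀ := by
          rw [dist_comm, dist_eq_norm, hδ_norm (m k)]
          exact hk
        have := hδ₀' (x (m k)) (hxLev _) (x (m k + 1)) (hxLev _) hd1
        rwa [Real.dist_eq, sub_zero, ← Real.dist_eq]
      have : Tendsto (fun k => (f (x (m k)) - f (x (m k + 1))) + f (x (m k + 1)))
          atTop (𝓝 (0 + fstar)) := hfd.add hB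
      simp only [sub_add_cancel, zero_add] at this
      apply this.congr
      intro k
      have he : l k - (j + 1) = m k := by simp only [hm]; omega
      rw [he]
  -- f (x k) → fstar
  have hfx_succ : Tendsto (fun k => f (x (k + 1))) atTop (𝓝 fstar) := by
    rw [Metric.tendsto_nhds]
    intro ε hε
    have hall : ∀ᶠ k in atTop, ∀ j ∈ Finset.range (N + 1),
        dist (f (x (l k - j))) fstar < ε := by
      rw [eventually_all_finset]
      intro j _
      exact Metric.tendsto_nhds.1 (claim j) ε hε
    obtain ⟨K, hK⟩ := eventually_atTop.1 hall
    refine eventually_atTop.2 ⟨K, fun k hk => ?_⟩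
    set M : ℕ := k + N + 1 with hM
    have h1 := hK M (by omega)
    have h2 : l M - (l M - (k + 1)) = k + 1 := by
      have := hl_ge M
      have := hl_le M
      omega
    have h3 : l M - (k + 1) ∈ Finset.range (N + 1) := by
      have := hl_le M
      simp only [Finset.mem_range]
      omega
    have := h1 _ h3
    rwa [h2] at this
  have hfx : Tendsto (fun k => f (x k)) atTop (𝓝 fstar) :=
    (tendsto_add_atTop_iff_nat 1).1 hfx_succ
  -- w → 0 and δ → 0
  have hdiff : Tendsto (fun k => fl k - f (x (k + 1))) atTop (𝓝 0) := by
    have := hfl_tendsto.sub hfx_succ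
    simpa using this
  have hw0 : Tendsto w atTop (𝓝 0) :=
    nmls_tendsto_zero_of_le hσ0 hw_nonneg hdiff (Eventually.of_forall hw_le)
  have hδ0 : Tendsto δ atTop (𝓝 0) :=
    nmls_sqrt_squeeze (c₂ ^ 2 / c₁) hδ_nonneg hw0 (Eventually.of_forall hδ_sq)
  -- bound on the gradient over Lev
  have hg_cont : Continuous g := by
    have h1 : Continuous (fun y => fderiv ℝ f y) := hf.continuous_fderiv one_ne_zero
    have h2 : Continuous fun y =>
        (InnerProductSpace.toDual ℝ (EuclideanSpace ℝ (Fin n))).symm (fderiv ℝ f y) :=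
      (InnerProductSpace.toDual ℝ (EuclideanSpace ℝ (Fin n))).symm.continuous.comp h1
    apply h2.congr
    intro y
    rw [(hg y).hasFDerivAt.fderiv, LinearIsometryEquiv.symm_apply_apply]
  obtain ⟨zg, hzgLev, hzgmax⟩ := hLev_cpt.exists_isMaxOn hLev_ne
    (hg_cont.norm).continuousOn
  set G : ℝ := ‖g zg‖ with hG
  have hG0 : 0 ≤ G := norm_nonneg _
  have hgG : ∀ k, ‖g (x k)‖ ≤ G := fun k => hzgmax (hxLev k)
  have hdG : ∀ k, ‖d k‖ ≤ c₂ * G + 1 := by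
    intro k
    have h1 := (hcd k).2
    have h2 := hgG k
    nlinarith
  -- thickening radius
  obtain ⟨r, hr0, hrsub⟩ := hLev_cpt.exists_thickening_subset_open hCopen hLC
  -- final ε argument
  rw [Metric.tendsto_nhds]
  intro ε hε
  have hden : 0 < Lip * (c₂ * G + 1) := by positivity
  set B : ℝ := ρ * (2 * (1 - σ) * c₁ * ε ^ 2) / (Lip * (c₂ * G + 1)) with hB
  have hB0 : 0 < B := by
    apply div_pos _ hden
    have h1σ : 0 < 1 - σ := by linarith
    positivity
  have ev1 : ∀ᶠ k in atTop, δ k < ρ * r := by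
    have := Metric.tendsto_nhds.1 hδ0 (ρ * r) (by positivity)
    filter_upwards [this] with k hk
    rwa [Real.dist_eq, sub_zero, abs_of_nonneg (hδ_nonneg k)] at hk
  have ev2 : ∀ᶠ k in atTop, w k < s * c₁ * ε ^ 2 := by
    have := Metric.tendsto_nhds.1 hw0 (s * c₁ * ε ^ 2) (by positivity)
    filter_upwards [this] with k hk
    rwa [Real.dist_eq, sub_zero, abs_of_nonneg (hw_nonneg k)] at hk
  have ev3 : ∀ᶠ k in atTop, δ k < B := by
    have := Metric.tendsto_nhds.1 hδ0 B hB0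
    filter_upwards [this] with k hk
    rwa [Real.dist_eq, sub_zero, abs_of_nonneg (hδ_nonneg k)] at hk
  filter_upwards [ev1, ev2, ev3] with k h1 h2 h3
  rw [Real.dist_eq, sub_zero, abs_of_nonneg (norm_nonneg _)]
  by_contra hcon
  push_neg at hcon
  -- hcon : ε ≤ ‖g (x k)‖
  have hgε2 : ε ^ 2 ≤ ‖g (x k)‖ ^ 2 := by
    have := pow_le_pow_left₀ hε.le hcon 2
    simpa using this
  have hPk : c₁ * ε ^ 2 ≤ -(p k) := by
    have h4 := hp_le k
    have h5 : c₁ * ε ^ 2 ≤ c₁ * ‖g (x k)‖ ^ 2 := mul_le_mul_of_nonneg_left hgε2 hc₁0.le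
    linarith
  -- α k < s
  have hα_lt : α k < s := by
    have hwk : α k * (c₁ * ε ^ 2) ≤ w k := by
      simp only [hw]
      exact mul_le_mul_of_nonneg_left hPk (hα_pos k).le
    by_contra hge
    push_neg at hge
    have h6 : s * (c₁ * ε ^ 2) ≤ α k * (c₁ * ε ^ 2) :=
      mul_le_mul_of_nonneg_right hge (by positivity)
    have h7 : s * (c₁ * ε ^ 2) = s * c₁ * ε ^ 2 := by ring
    linarith
  have hjk1 : 1 ≤ jk k := by
    rcases Nat.eq_zero_or_pos (jk k) with h | h
    · exfalso
      rw [hα k, h, pow_zero, mul_one] at hα_lt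
      exact lt_irrefl s hα_lt
    · exact h
  -- the failed trial step
  set t : ℝ := s * ρ ^ (jk k - 1) with ht
  have ht0 : 0 < t := by rw [ht]; positivity
  have htρ : t * ρ = α k := by
    rw [ht, hα k, mul_assoc, ← pow_succ]
    congr 2
    omega
  have ht1 : t ≤ 1 := by
    rw [ht]
    calc s * ρ ^ (jk k - 1) ≤ 1 * 1 ^ (jk k - 1) :=
      mul_le_mul hs1 (pow_le_pow_left₀ hρ0.le hρ1.le _) (by positivity) one_pos.le
    _ = 1 := by simp
  have hfail : T k + σ * t * p k < f (x k + t • d k) := by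
    by_contra hmem
    push_neg at hmem
    have hmem' : jk k - 1 ∈ {j : ℕ | f (x k + (s * ρ ^ j) • d k) ≤
        T k + σ * (s * ρ ^ j) * (inner ℝ (g (x k)) (d k) : ℝ)} := by
      simp only [Set.mem_setOf_eq, ← ht, ← hp]
      exact hmem
    have := (hjk k).2 hmem'
    omega
  -- step length bounds
  have ht_len : t * ‖d k‖ = δ k / ρ := by
    rw [eq_div_iff hρ0.ne']
    simp only [hδ]
    rw [← htρ]
    ring
  have ht_len_lt : t * ‖d k‖ < r := by
    rw [ht_len, div_lt_iff₀ hρ0]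
    calc δ k < ρ * r := h1
    _ = r * ρ := by ring
  -- descent lemma along the trial step
  have hdes : f (x k + t • d k) ≤ f (x k) + (inner ℝ (g (x k)) (t • d k) : ℝ)
      + Lip / 2 * ‖t • d k‖ ^ 2 := by
    apply nmls_descent f g hg Lip (x k) (t • d k) C _ hLip
    intro t' ht'
    apply hrsub
    rw [Metric.mem_thickening_iff]
    refine ⟨x k, hxLev k, ?_⟩
    rw [dist_eq_norm]
    have he : x k + t' • t • d k - x k = t' • t • d k := by abel
    rw [he, norm_smul, norm_smul, Real.norm_eq_abs, Real.norm_eq_abs,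
      abs_of_nonneg ht'.1, abs_of_pos ht0]
    calc t' * (t * ‖d k‖) ≤ 1 * (t * ‖d k‖) :=
      mul_le_mul_of_nonneg_right ht'.2 (by positivity)
    _ = t * ‖d k‖ := by ring
    _ < r := ht_len_lt
  rw [real_inner_smul_right] at hdes
  have hnorm_t : ‖t • d k‖ = t * ‖d k‖ := by
    rw [norm_smul, Real.norm_eq_abs, abs_of_pos ht0]
  rw [hnorm_t] at hdes
  -- combine: (1-σ) * t * (-p k) < Lip/2 * t^2 * ‖d k‖^2
  have hTk := hT_ge k
  have hcomb : t * ((1 - σ) * (-(p k))) < t * (Lip / 2 * t * ‖d k‖ ^ 2) := by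
    have hplem : (inner ℝ (g (x k)) (d k) : ℝ) = p k := by rw [hp]
    rw [hplem] at hdes
    nlinarith [hfail, hdes, hTk]
  have hdiv : (1 - σ) * (-(p k)) < Lip / 2 * t * ‖d k‖ ^ 2 :=
    (mul_lt_mul_iff_right₀ ht0).1 hcomb
  -- final contradiction
  have hb1 : Lip / 2 * t * ‖d k‖ ^ 2 = Lip / 2 * (t * ‖d k‖) * ‖d k‖ := by ring
  have hb2 : Lip / 2 * (t * ‖d k‖) * ‖d k‖ ≤ Lip / 2 * (δ k / ρ) * (c₂ * G + 1) := by
    rw [ht_len]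
    apply mul_le_mul_of_nonneg_left (hdG k)
    apply mul_nonneg (by positivity)
    exact div_nonneg (hδ_nonneg k) hρ0.le
  have hb3 : Lip / 2 * (δ k / ρ) * (c₂ * G + 1) < Lip / 2 * (B / ρ) * (c₂ * G + 1) := by
    apply mul_lt_mul_of_pos_right _ (by positivity)
    apply mul_lt_mul_of_pos_left _ (by positivity)
    exact (div_lt_div_iff_of_pos_right hρ0).2 h3
  have hb4 : Lip / 2 * (B / ρ) * (c₂ * G + 1) = (1 - σ) * c₁ * ε ^ 2 := by
    rw [hB]
    field_simp
  have hlow : (1 - σ) * (c₁ * ε ^ 2) ≤ (1 - σ) * (-(p k)) :=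
    mul_le_mul_of_nonneg_left hPk (by linarith)
  rw [hb1] at hdiv
  linarith
end

section
/- Let n ≥ 1 and let f : ℝⁿ → ℝ be continuously differentiable with gradient g. Fix s ∈ (0,1], ρ ∈ (0,1), σ ∈ (0,1/2), an integer N ≥ 1, and weights η_k ∈ [0,1). Let x_{k+1} = x_k + α_k d_k, where α_k = s ρ^{j_k} and j_k is the smallest j ∈ ℕ with f(x_k + s ρ^j d_k) ≤ T_k + σ s ρ^j ⟨g(x_k), d_k⟩; here f_k = f(x_k), T̄_0 = f_0, T̄_k = (1−η_{k−1}) f_k + η_{k−1} T̄_{k−1} for 1 ≤ k ≤ N−1, T̄_k = Σ_{j=0}^{N−1}(η_{k−1}⋯η_{k−j})(1−η_{k−j−1}) f_{k−j} + (η_{k−1}⋯η_{k−N}) f_{k−N} for k ≥ N, and the nonmonotone term is T_0 = f_0, T_k = f_k + η_{k−1}(T̄_k − f_k) for 1 ≤ k ≤ N−1, T_k = max{T̄_k, f_k} for k ≥ N. Assume (H1) the level set L(x_0) = {x ∈ ℝⁿ : f(x) ≤ f(x_0)} is bounded; (H2) there exist an open convex set C ⊇ L(x_0) and L > 0 with ‖g(x)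 − g(y)‖ ≤ L‖x − y‖ for all x, y ∈ C; and (H3) there exist 0 < c₁ < 1 < c₂ with ⟨g(x_k), d_k⟩ ≤ −c₁‖g(x_k)‖² and ‖d_k⟩ ≤ c₂‖g(x_k)‖ for all k. Then lim_{k→∞} ‖g(x_k)‖ = 0. -/
open Filter Finset
set_option maxHeartbeats 2000000

lemma descent_lemma {E : Type*} [NormedAddCommGroup E] [InnerProductSpace ℝ E] [CompleteSpace E]
    (f : E → ℝ) (g : E → E) (hg : ∀ y, HasGradientAt f (g y) y)
    (C : Set E) (L : ℝ)
    (hLip : ∀ a ∈ C, ∀ b ∈ C, ‖g a - g b‖ ≤ L * ‖a - b‖)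
    (x v : E) (hseg : ∀ t ∈ Set.Icc (0:ℝ) 1, x + t • v ∈ C) :
    f (x + v) ≤ f x + inner ℝ (g x) v + L / 2 * ‖v‖ ^ 2 := by
  have hline : ∀ t : ℝ, HasDerivAt (fun t : ℝ => x + t • v) v t := by
    intro t
    simpa using ((hasDerivAt_id t).smul_const v).const_add x
  have hφ : ∀ t : ℝ, HasDerivAt (fun t => f (x + t • v)) (inner ℝ (g (x + t • v)) v) t := by
    intro t
    have := ((hg (x + t • v)).hasFDerivAt.comp_hasDerivAt t (hline t))
    simp [InnerProductSpace.toDual_apply_apply] at this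
    exact this
  set ψ : ℝ → ℝ := fun t => f (x + t • v) - t * inner ℝ (g x) v - L / 2 * t ^ 2 * ‖v‖ ^ 2 with hψdef
  have hψ : ∀ t : ℝ, HasDerivAt ψ
      (inner ℝ (g (x + t • v)) v - inner ℝ (g x) v - L * t * ‖v‖ ^ 2) t := by
    intro t
    have h1 : HasDerivAt (fun t : ℝ => t * inner ℝ (g x) v) (inner ℝ (g x) v) t := by
      simpa using (hasDerivAt_id t).mul_const (inner ℝ (g x) v : ℝ)
    have h2 : HasDerivAt (fun t : ℝ => L / 2 * t ^ 2 * ‖v‖ ^ 2) (L * t * ‖v‖ ^ 2) t := by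
      have := ((hasDerivAt_pow 2 t).const_mul (L / 2)).mul_const (‖v‖ ^ 2)
      exact this.congr_deriv (by ring)
    exact ((hφ t).sub h1).sub h2
  have hanti : AntitoneOn ψ (Set.Icc 0 1) := by
    apply antitoneOn_of_deriv_nonpos (convex_Icc 0 1)
    · exact fun t ht => (hψ t).continuousAt.continuousWithinAt
    · exact fun t ht => (hψ t).differentiableAt.differentiableWithinAt
    · intro t ht
      rw [interior_Icc] at ht
      rw [(hψ t).deriv]
      have hlip := hLip _ (hseg t ⟨ht.1.le, ht.2.le⟩) _ (by simpa using hseg 0 ⟨le_rfl, zero_le_one⟩)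
      have h1 : (inner ℝ (g (x + t • v)) v : ℝ) - inner ℝ (g x) v ≤ L * t * ‖v‖ ^ 2 := by
        calc (inner ℝ (g (x + t • v)) v : ℝ) - inner ℝ (g x) v
            = inner ℝ (g (x + t • v) - g x) v := by rw [inner_sub_left]
          _ ≤ ‖g (x + t • v) - g x‖ * ‖v‖ := real_inner_le_norm _ _
          _ ≤ (L * ‖t • v‖) * ‖v‖ := by
              apply mul_le_mul_of_nonneg_right _ (norm_nonneg v)
              simpa using hlip
          _ = L * t * ‖v‖ ^ 2 := by
              rw [norm_smul, Real.norm_eq_abs, abs_of_nonneg ht.1.le]; ring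
      linarith
  have := hanti (Set.mem_Icc.2 ⟨le_rfl, zero_le_one⟩) (Set.mem_Icc.2 ⟨zero_le_one, le_rfl⟩) zero_le_one
  simp only [hψdef, one_smul, zero_smul, add_zero, one_pow, mul_one, one_mul, zero_pow,
    mul_zero, sub_zero, zero_mul] at this
  linarith

/-- Theorem 1 (global convergence) for Algorithm NMLS with the nonmonotone
term (10), in which the reference value for the first `N` iterations is the
convex combination `f_k + η_{k-1}(T̄_k - f_k)`: under (H1)–(H3), the gradients
along the iterates tend to zero. -/
theorem nmls_gradient_tendsto_zero' (n : ℕ) (hn : 1 ≤ n)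
    (f : EuclideanSpace ℝ (Fin n) → ℝ)
    (g : EuclideanSpace ℝ (Fin n) → EuclideanSpace ℝ (Fin n))
    (hf : ContDiff ℝ 1 f) (hg : ∀ y, HasGradientAt f (g y) y)
    (s ρ σ : ℝ) (hs : s ∈ Set.Ioc (0 : ℝ) 1) (hρ : ρ ∈ Set.Ioo (0 : ℝ) 1)
    (hσ : σ ∈ Set.Ioo (0 : ℝ) (1 / 2))
    (N : ℕ) (hN : 1 ≤ N) (η : ℕ → ℝ) (hη : ∀ k, η k ∈ Set.Ico (0 : ℝ) 1)
    (x d : ℕ → EuclideanSpace ℝ (Fin n)) (α : ℕ → ℝ) (jk : ℕ → ℕ)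
    (Tbar T : ℕ → ℝ)
    (hT0 : Tbar 0 = f (x 0))
    (hTrec : ∀ k, 1 ≤ k → k ≤ N - 1 →
      Tbar k = (1 - η (k - 1)) * f (x k) + η (k - 1) * Tbar (k - 1))
    (hTsum : ∀ k, N ≤ k → Tbar k =
      (∑ j ∈ Finset.range N,
          (∏ i ∈ Finset.range j, η (k - 1 - i)) * (1 - η (k - j - 1)) * f (x (k - j)))
        + (∏ i ∈ Finset.range N, η (k - 1 - i)) * f (x (k - N)))
    (hT0' : T 0 = f (x 0))
    (hTlt : ∀ k, 1 ≤ k → k ≤ N - 1 → T k = f (x k) + η (k - 1) * (Tbar k - f (x k)))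
    (hTge : ∀ k, N ≤ k → T k = max (Tbar k) (f (x k)))
    (hjk : ∀ k, IsLeast {j : ℕ | f (x k + (s * ρ ^ j) • d k) ≤
      T k + σ * (s * ρ ^ j) * (inner ℝ (g (x k)) (d k) : ℝ)} (jk k))
    (hα : ∀ k, α k = s * ρ ^ (jk k))
    (hx : ∀ k, x (k + 1) = x k + α k • d k)
    (H1 : Bornology.IsBounded {y : EuclideanSpace ℝ (Fin n) | f y ≤ f (x 0)})
    (H2 : ∃ C : Set (EuclideanSpace ℝ (Fin n)), IsOpen C ∧ Convex ℝ C ∧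
      {y : EuclideanSpace ℝ (Fin n) | f y ≤ f (x 0)} ⊆ C ∧
      ∃ L > (0 : ℝ), ∀ a ∈ C, ∀ b ∈ C, ‖g a - g b‖ ≤ L * ‖a - b‖)
    (H3 : ∃ c₁ c₂ : ℝ, 0 < c₁ ∧ c₁ < 1 ∧ 1 < c₂ ∧
      ∀ k, (inner ℝ (g (x k)) (d k) : ℝ) ≤ -c₁ * ‖g (x k)‖ ^ 2 ∧
        ‖d k‖ ≤ c₂ * ‖g (x k)‖) :
    Filter.Tendsto (fun k => ‖g (x k)‖) Filter.atTop (nhds 0) := by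
  obtain ⟨hs0, hs1⟩ := hs
  obtain ⟨hρ0, hρ1⟩ := hρ
  obtain ⟨hσ0, hσ1⟩ := hσ
  obtain ⟨C, hCo, hCc, hLevsubC, L, hL, hLip⟩ := H2
  obtain ⟨c₁, c₂, hc1, hc11, hc2, hcd⟩ := H3
  set Lev : Set (EuclideanSpace ℝ (Fin n)) := {y | f y ≤ f (x 0)} with hLevdef
  -- basic facts
  have hgd : ∀ k, (inner ℝ (g (x k)) (d k) : ℝ) ≤ 0 := by
    intro k
    have := (hcd k).1
    nlinarith [sq_nonneg ‖g (x k)‖]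
  have hαpos : ∀ k, 0 < α k := fun k => by
    rw [hα k]; positivity
  have hαles : ∀ k, α k ≤ s := fun k => by
    rw [hα k]
    calc s * ρ ^ jk k ≤ s * 1 := by
          apply mul_le_mul_of_nonneg_left _ hs0.le
          exact pow_le_one₀ hρ0.le hρ1.le
      _ = s := mul_one s
  have hArm : ∀ k, f (x (k + 1)) ≤ T k + σ * α k * (inner ℝ (g (x k)) (d k) : ℝ) := by
    intro k
    have h := (hjk k).1
    simp only [Set.mem_setOf_eq] at h
    rw [hx k, hα k]
    convert h using 3 <;> ring
  have hfsT : ∀ k, f (x (k + 1)) ≤ T k := by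
    intro k
    have := hArm k
    have h2 : σ * α k * (inner ℝ (g (x k)) (d k) : ℝ) ≤ 0 :=
      mul_nonpos_of_nonneg_of_nonpos (mul_nonneg hσ0.le (hαpos k).le) (hgd k)
    linarith
  -- the local max function
  set M : ℕ → ℝ := fun k => (Finset.range (min k N + 1)).sup' Finset.nonempty_range_add_one
      (fun i => f (x (k - i))) with hMdef
  have hMle : ∀ k i, i ≤ min k N → f (x (k - i)) ≤ M k := by
    intro k i hi
    simp only [hMdef]
    exact Finset.le_sup' (fun i => f (x (k - i))) (Finset.mem_range_succ_iff.2 hi)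
  have hfM : ∀ k, f (x k) ≤ M k := fun k => by
    simpa using hMle k 0 (Nat.zero_le _)
  have hM0 : M 0 = f (x 0) := by
    simp [hMdef]
  have hMup : ∀ k, k + 1 ≤ N → M k ≤ M (k + 1) := by
    intro k hk
    apply Finset.sup'_le
    intro i hi
    rw [Finset.mem_range_succ_iff] at hi
    have h2 := hMle (k+1) (i+1) (by omega)
    rwa [show (k+1) - (i+1) = k - i by omega] at h2
  -- early induction
  have hEarly : ∀ k, k ≤ N - 1 → f (x k) ≤ Tbar k ∧ Tbar k ≤ M k ∧
      f (x k) ≤ T k ∧ T k ≤ Tbar k ∧ T k ≤ M k := by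
    intro k
    induction k with
    | zero => intro _; rw [hT0, hT0', hM0]; exact ⟨le_rfl, le_rfl, le_rfl, le_rfl, le_rfl⟩
    | succ m ih =>
      intro hk
      obtain ⟨ih1, ih2, ih3, ih4, ih5⟩ := ih (by omega)
      have hη' := hη m
      have hrec := hTrec (m+1) (by omega) hk
      have hlt := hTlt (m+1) (by omega) hk
      simp only [Nat.add_sub_cancel] at hrec hlt
      have hfs : f (x (m+1)) ≤ Tbar m := le_trans (hfsT m) ih4
      have h1 : f (x (m+1)) ≤ Tbar (m+1) := by rw [hrec]; nlinarith [hη'.1, hη'.2]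
      have h2 : Tbar (m+1) ≤ M (m+1) := by
        rw [hrec]
        have hMm : Tbar m ≤ M (m+1) := le_trans ih2 (hMup m (by omega))
        have hfm : f (x (m+1)) ≤ M (m+1) := hfM (m+1)
        nlinarith [hη'.1, hη'.2]
      have h4 : T (m+1) ≤ Tbar (m+1) := by rw [hlt]; nlinarith [hη'.1, hη'.2]
      have h3 : f (x (m+1)) ≤ T (m+1) := by rw [hlt]; nlinarith [hη'.1, hη'.2]
      exact ⟨h1, h2, h3, h4, le_trans h4 h2⟩
  -- late bound on Tbar
  have hTbarM : ∀ k, N ≤ k → Tbar k ≤ M k := by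
    intro k hk
    rw [hTsum k hk]
    have hcoef : ∀ j, (0:ℝ) ≤ ∏ i ∈ Finset.range j, η (k - 1 - i) :=
      fun j => Finset.prod_nonneg fun i _ => (hη _).1
    have hstep : ∀ j ∈ Finset.range N,
        (∏ i ∈ Finset.range j, η (k - 1 - i)) * (1 - η (k - j - 1)) * f (x (k - j)) ≤
        ((∏ i ∈ Finset.range j, η (k - 1 - i)) -
          ∏ i ∈ Finset.range (j + 1), η (k - 1 - i)) * M k := by
      intro j hj
      rw [Finset.mem_range] at hj
      have he : (∏ i ∈ Finset.range (j + 1), η (k - 1 - i)) =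
          (∏ i ∈ Finset.range j, η (k - 1 - i)) * η (k - 1 - j) := Finset.prod_range_succ _ _
      have hkj : k - j - 1 = k - 1 - j := by omega
      rw [hkj, he]
      have hco : 0 ≤ (∏ i ∈ Finset.range j, η (k - 1 - i)) * (1 - η (k - 1 - j)) :=
        mul_nonneg (hcoef j) (by linarith [(hη (k - 1 - j)).2])
      have hfle : f (x (k - j)) ≤ M k := hMle k j (by omega)
      have h2 := mul_le_mul_of_nonneg_left hfle hco
      calc (∏ i ∈ Finset.range j, η (k - 1 - i)) * (1 - η (k - 1 - j)) * f (x (k - j))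
          ≤ (∏ i ∈ Finset.range j, η (k - 1 - i)) * (1 - η (k - 1 - j)) * M k := by
            rw [mul_assoc, mul_assoc]
            exact mul_le_mul_of_nonneg_left
              (mul_le_mul_of_nonneg_left hfle (by linarith [(hη (k - 1 - j)).2])) (hcoef j)
        _ = ((∏ i ∈ Finset.range j, η (k - 1 - i)) -
            (∏ i ∈ Finset.range j, η (k - 1 - i)) * η (k - 1 - j)) * M k := by ring
    have hsum := Finset.sum_le_sum hstep
    have hlast : (∏ i ∈ Finset.range N, η (k - 1 - i)) * f (x (k - N)) ≤
        (∏ i ∈ Finset.range N, η (k - 1 - i)) * M k :=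
      mul_le_mul_of_nonneg_left (hMle k N (by omega)) (hcoef N)
    have htel : ∑ j ∈ Finset.range N, (((∏ i ∈ Finset.range j, η (k - 1 - i)) -
        ∏ i ∈ Finset.range (j + 1), η (k - 1 - i)) * M k) =
        (1 - ∏ i ∈ Finset.range N, η (k - 1 - i)) * M k := by
      rw [← Finset.sum_mul, Finset.sum_range_sub' (fun j => ∏ i ∈ Finset.range j, η (k - 1 - i))]
      simp
    calc (∑ j ∈ Finset.range N,
          (∏ i ∈ Finset.range j, η (k - 1 - i)) * (1 - η (k - j - 1)) * f (x (k - j)))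
        + (∏ i ∈ Finset.range N, η (k - 1 - i)) * f (x (k - N))
        ≤ (1 - ∏ i ∈ Finset.range N, η (k - 1 - i)) * M k
          + (∏ i ∈ Finset.range N, η (k - 1 - i)) * M k := by
          rw [← htel]; exact add_le_add hsum hlast
      _ = M k := by ring
  have hfT : ∀ k, f (x k) ≤ T k := by
    intro k
    rcases Nat.lt_or_ge k N with h | h
    · exact (hEarly k (by omega)).2.2.1
    · rw [hTge k h]; exact le_max_right _ _
  have hTM : ∀ k, T k ≤ M k := by
    intro k
    rcases Nat.lt_or_ge k N with h | h
    · exact (hEarly k (by omega)).2.2.2.2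
    · rw [hTge k h]; exact max_le (hTbarM k h) (hfM k)
  have hMdec : ∀ k, M (k + 1) ≤ M k := by
    intro k
    apply Finset.sup'_le
    intro i hi
    rw [Finset.mem_range_succ_iff] at hi
    match i with
    | 0 => simpa using le_trans (hfsT k) (hTM k)
    | (i' + 1) =>
      have : (k + 1) - (i' + 1) = k - i' := by omega
      rw [this]
      exact hMle k i' (by omega)
  have hManti : Antitone M := antitone_nat_of_succ_le hMdec
  have hxLev : ∀ k, x k ∈ Lev := by
    intro k
    have : M k ≤ M 0 := hManti (Nat.zero_le k)
    simp only [hLevdef, Set.mem_setOf_eq]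
    rw [← hM0]
    exact le_trans (hfM k) this
  -- compactness facts
  have hLevCl : IsClosed Lev := isClosed_le hf.continuous continuous_const
  have hLevCompact : IsCompact Lev := Metric.isCompact_of_isClosed_isBounded hLevCl H1
  have hgcont : Continuous g := by
    have h1 : Continuous fun y => fderiv ℝ f y := hf.continuous_fderiv one_ne_zero
    have h2 : ∀ y, g y =
        (InnerProductSpace.toDual ℝ (EuclideanSpace ℝ (Fin n))).symm (fderiv ℝ f y) := by
      intro y
      rw [(hg y).hasFDerivAt.fderiv]
      simp
    exact ((InnerProductSpace.toDual ℝ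
      (EuclideanSpace ℝ (Fin n))).symm.continuous.comp h1).congr fun y => (h2 y).symm
  obtain ⟨G, hG⟩ : ∃ G, ∀ y ∈ Lev, ‖g y‖ ≤ G :=
    hLevCompact.exists_bound_of_continuousOn hgcont.continuousOn
  have hG0 : 0 ≤ G := le_trans (norm_nonneg _) (hG (x 0) (hxLev 0))
  have hdb : ∀ k, ‖d k‖ ≤ c₂ * (G + 1) := by
    intro k
    calc ‖d k‖ ≤ c₂ * ‖g (x k)‖ := (hcd k).2
      _ ≤ c₂ * (G + 1) := by
          apply mul_le_mul_of_nonneg_left _ (by linarith)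
          linarith [hG (x k) (hxLev k)]
  obtain ⟨δ, hδpos, hδ⟩ := hLevCompact.exists_thickening_subset_open hCo hLevsubC
  have hCin : ∀ y ∈ Lev, ∀ z : EuclideanSpace ℝ (Fin n), dist z y < δ → z ∈ C := by
    intro y hy z hz
    exact hδ (Metric.mem_thickening_iff.2 ⟨y, hy, hz⟩)
  -- lower step bound
  obtain ⟨β₁, hβ₁def⟩ : ∃ b : ℝ, b = 2 * (1 - σ) * c₁ / (L * c₂ ^ 2) := ⟨_, rfl⟩
  obtain ⟨β₂, hβ₂def⟩ : ∃ b : ℝ, b = δ / (c₂ * (G + 1)) := ⟨_, rfl⟩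
  have h1σ : 0 < 1 - σ := by linarith
  have hc20 : (0:ℝ) < c₂ := by linarith
  have hβ₁pos : 0 < β₁ := by
    rw [hβ₁def]
    exact div_pos (mul_pos (mul_pos (by norm_num) h1σ) hc1) (mul_pos hL (pow_pos hc20 2))
  have hβ₂pos : 0 < β₂ := by
    rw [hβ₂def]; exact div_pos hδpos (mul_pos hc20 (by linarith))
  obtain ⟨αbar, hαbardef⟩ : ∃ b : ℝ, b = min s (ρ * min β₁ β₂) := ⟨_, rfl⟩
  have hαbarpos : 0 < αbar := hαbardef ▸ lt_min hs0 (mul_pos hρ0 (lt_min hβ₁pos hβ₂pos))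
  have hαlow : ∀ k, g (x k) ≠ 0 → αbar ≤ α k := by
    intro k hgk
    have hgpos : 0 < ‖g (x k)‖ := norm_pos_iff.2 hgk
    rcases Nat.eq_zero_or_pos (jk k) with h0 | hpos
    · rw [hα k, h0, pow_zero, mul_one, hαbardef]
      exact min_le_left _ _
    · obtain ⟨j, hj⟩ : ∃ j, jk k = j + 1 := ⟨jk k - 1, by omega⟩
      have hnot : j ∉ {j : ℕ | f (x k + (s * ρ ^ j) • d k) ≤
          T k + σ * (s * ρ ^ j) * (inner ℝ (g (x k)) (d k) : ℝ)} := by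
        intro hmem
        have := (hjk k).2 hmem
        omega
      simp only [Set.mem_setOf_eq, not_le] at hnot
      obtain ⟨β, hβdef⟩ : ∃ b : ℝ, b = s * ρ ^ j := ⟨_, rfl⟩
      have hβpos : 0 < β := by rw [hβdef]; positivity
      rw [← hβdef] at hnot
      have hαβ : α k = ρ * β := by rw [hα k, hj, hβdef, pow_succ]; ring
      have hdn : d k ≠ 0 := by
        intro hd0
        rw [hd0] at hnot
        simp only [smul_zero, add_zero, inner_zero_right, mul_zero] at hnot
        exact absurd (hfT k) (not_le.2 hnot)
      have hdpos : 0 < ‖d k‖ := norm_pos_iff.2 hdn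
      have hmin : min β₁ β₂ ≤ β := by
        rcases le_or_gt δ (β * ‖d k‖) with hge | hlt
        · refine le_trans (min_le_right _ _) ?_
          rw [hβ₂def, div_le_iff₀ (mul_pos hc20 (by linarith))]
          calc δ ≤ β * ‖d k‖ := hge
            _ ≤ β * (c₂ * (G + 1)) := mul_le_mul_of_nonneg_left (hdb k) hβpos.le
        · refine le_trans (min_le_left _ _) ?_
          have hseg : ∀ t ∈ Set.Icc (0:ℝ) 1, x k + t • (β • d k) ∈ C := by
            intro t ht
            apply hCin (x k) (hxLev k)
            rw [dist_eq_norm, add_sub_cancel_left, norm_smul, norm_smul,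
              Real.norm_eq_abs, Real.norm_eq_abs, abs_of_nonneg ht.1, abs_of_pos hβpos]
            calc t * (β * ‖d k‖) ≤ 1 * (β * ‖d k‖) :=
                  mul_le_mul_of_nonneg_right ht.2 (by positivity)
              _ = β * ‖d k‖ := one_mul _
              _ < δ := hlt
          have hdl := descent_lemma f g hg C L hLip (x k) (β • d k) hseg
          rw [real_inner_smul_right, norm_smul, Real.norm_eq_abs, abs_of_pos hβpos] at hdl
          have hTk := hfT k
          have e1 : σ * β * (inner ℝ (g (x k)) (d k) : ℝ) <
              β * (inner ℝ (g (x k)) (d k) : ℝ) + L / 2 * (β * ‖d k‖) ^ 2 := by linarith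
          have e3 : (1 - σ) * β * (c₁ * ‖g (x k)‖ ^ 2) ≤
              (1 - σ) * β * (-(inner ℝ (g (x k)) (d k) : ℝ)) :=
            mul_le_mul_of_nonneg_left (by linarith [(hcd k).1])
              (mul_nonneg h1σ.le hβpos.le)
          have hc2g : ‖d k‖ ^ 2 ≤ (c₂ * ‖g (x k)‖) ^ 2 := by
            have h := (hcd k).2
            nlinarith [norm_nonneg (d k)]
          have e4 : L / 2 * (β * ‖d k‖) ^ 2 ≤ L / 2 * β ^ 2 * (c₂ * ‖g (x k)‖) ^ 2 := by
            have h := mul_le_mul_of_nonneg_left hc2g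
              (le_of_lt (by positivity : (0:ℝ) < L / 2 * β ^ 2))
            calc L / 2 * (β * ‖d k‖) ^ 2 = L / 2 * β ^ 2 * ‖d k‖ ^ 2 := by ring
              _ ≤ L / 2 * β ^ 2 * (c₂ * ‖g (x k)‖) ^ 2 := h
          have e6 : (1 - σ) * c₁ * β * ‖g (x k)‖ ^ 2 <
              L / 2 * β ^ 2 * c₂ ^ 2 * ‖g (x k)‖ ^ 2 := by nlinarith [e1, e3, e4]
          have e7 : (1 - σ) * c₁ * β < L / 2 * β ^ 2 * c₂ ^ 2 :=
            lt_of_mul_lt_mul_right e6 (sq_nonneg _)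
          rw [hβ₁def, div_le_iff₀ (mul_pos hL (pow_pos hc20 2))]
          nlinarith [e7, hβpos, mul_pos hβpos hβpos]
      calc αbar ≤ ρ * min β₁ β₂ := by rw [hαbardef]; exact min_le_right _ _
        _ ≤ ρ * β := mul_le_mul_of_nonneg_left hmin hρ0.le
        _ = α k := hαβ.symm
  obtain ⟨c, hcdef⟩ : ∃ b : ℝ, b = σ * αbar * c₁ := ⟨_, rfl⟩
  have hcpos : 0 < c := hcdef ▸ mul_pos (mul_pos hσ0 hαbarpos) hc1
  have hkey : ∀ k, f (x (k + 1)) ≤ M k - c * ‖g (x k)‖ ^ 2 := by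
    intro k
    by_cases hgk : g (x k) = 0
    · rw [hgk, norm_zero]
      simpa using le_trans (hfsT k) (hTM k)
    · have h1 := hArm k
      have h4 := hTM k
      have hA : σ * α k * (inner ℝ (g (x k)) (d k) : ℝ) ≤
          σ * α k * (-(c₁ * ‖g (x k)‖ ^ 2)) :=
        mul_le_mul_of_nonneg_left (by linarith [(hcd k).1])
          (mul_nonneg hσ0.le (hαpos k).le)
      have hB : σ * αbar * (c₁ * ‖g (x k)‖ ^ 2) ≤ σ * α k * (c₁ * ‖g (x k)‖ ^ 2) :=
        mul_le_mul_of_nonneg_right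
          (mul_le_mul_of_nonneg_left (hαlow k hgk) hσ0.le)
          (by positivity)
      rw [hcdef]
      nlinarith [h1, h4, hA, hB]
  -- bounded below, convergence of M
  obtain ⟨B0, hB0⟩ : ∃ B0, ∀ y ∈ Lev, ‖f y‖ ≤ B0 :=
    hLevCompact.exists_bound_of_continuousOn hf.continuous.continuousOn
  have hoex : ∀ k, ∃ i, i ≤ min k N ∧ f (x (k - i)) = M k := by
    intro k
    obtain ⟨i, hi, h⟩ := Finset.exists_mem_eq_sup' Finset.nonempty_range_add_one
      (fun i => f (x (k - i)))
    exact ⟨i, Finset.mem_range_succ_iff.1 hi, h.symm⟩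
  choose o ho1 ho2 using hoex
  have hMB : ∀ k, -B0 ≤ M k := by
    intro k
    rw [← ho2 k]
    have := hB0 (x (k - o k)) (hxLev _)
    rw [Real.norm_eq_abs] at this
    linarith [abs_nonneg (f (x (k - o k))), neg_abs_le (f (x (k - o k)))]
  have hMtend : Tendsto M atTop (nhds (⨅ k, M k)) := by
    apply tendsto_atTop_ciInf hManti
    exact ⟨-B0, by rintro y ⟨k, rfl⟩; exact hMB k⟩
  set Ms : ℝ := ⨅ k, M k with hMsdef
  -- uniform continuity helper
  have hUC : ∀ u v : ℕ → EuclideanSpace ℝ (Fin n), (∀ k, u k ∈ Lev) → (∀ k, v k ∈ Lev) →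
      Tendsto (fun k => dist (u k) (v k)) atTop (nhds 0) →
      Tendsto (fun k => f (u k) - f (v k)) atTop (nhds 0) := by
    intro u v hu hv hdist
    have huc := hLevCompact.uniformContinuousOn_of_continuous hf.continuous.continuousOn
    rw [Metric.uniformContinuousOn_iff] at huc
    rw [Metric.tendsto_atTop] at hdist ⊢
    intro ε hε
    obtain ⟨δ', hδ'0, hδ'⟩ := huc ε hε
    obtain ⟨K, hK⟩ := hdist δ' hδ'0
    refine ⟨K, fun k hk => ?_⟩
    have hd : dist (u k) (v k) < δ' := by
      have := hK k hk
      rwa [Real.dist_eq, sub_zero, abs_of_nonneg dist_nonneg] at this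
    have := hδ' (u k) (hu k) (v k) (hv k) hd
    rwa [Real.dist_eq, sub_zero, ← Real.dist_eq]
  -- the induction
  have hPQ : ∀ j, Tendsto (fun k => f (x (k - o k - j))) atTop (nhds Ms) →
      Tendsto (fun k => ‖g (x (k - o k - (j + 1)))‖) atTop (nhds 0) := by
    intro j hP
    have hoN : ∀ k, o k ≤ N := fun k => le_trans (ho1 k) (min_le_right _ _)
    have hineq : ∀ k, N + j + 1 ≤ k →
        c * ‖g (x (k - o k - (j + 1)))‖ ^ 2 ≤ M (k - (N + j + 1)) - f (x (k - o k - j)) := by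
      intro k hk
      have ho := hoN k
      have e2 : (k - o k - (j + 1)) + 1 = k - o k - j := by omega
      have h := hkey (k - o k - (j + 1))
      rw [e2] at h
      have h2 : M (k - o k - (j + 1)) ≤ M (k - (N + j + 1)) := hManti (by omega)
      linarith
    have hub : Tendsto (fun k => M (k - (N + j + 1)) - f (x (k - o k - j))) atTop (nhds 0) := by
      have h1 : Tendsto (fun k => M (k - (N + j + 1))) atTop (nhds Ms) :=
        hMtend.comp (tendsto_sub_atTop_nat _)
      simpa using h1.sub hP
    have hsq : Tendsto (fun k => c * ‖g (x (k - o k - (j + 1)))‖ ^ 2) atTop (nhds 0) := by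
      apply tendsto_of_tendsto_of_tendsto_of_le_of_le' tendsto_const_nhds hub
      · exact Filter.Eventually.of_forall fun k => by positivity
      · filter_upwards [eventually_ge_atTop (N + j + 1)] with k hk using hineq k hk
    have hsq2 : Tendsto (fun k => ‖g (x (k - o k - (j + 1)))‖ ^ 2) atTop (nhds 0) := by
      have h2 := hsq.const_mul (1 / c)
      rw [mul_zero] at h2
      apply h2.congr
      intro k
      field_simp
    have h3 : Tendsto (fun k => Real.sqrt (‖g (x (k - o k - (j + 1)))‖ ^ 2))
        atTop (nhds (Real.sqrt 0)) := (Real.continuous_sqrt.tendsto 0).comp hsq2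
    rw [Real.sqrt_zero] at h3
    apply h3.congr
    intro k
    rw [Real.sqrt_sq (norm_nonneg _)]
  have hQP : ∀ j, Tendsto (fun k => f (x (k - o k - j))) atTop (nhds Ms) →
      Tendsto (fun k => ‖g (x (k - o k - (j + 1)))‖) atTop (nhds 0) →
      Tendsto (fun k => f (x (k - o k - (j + 1)))) atTop (nhds Ms) := by
    intro j hP hQ
    have hdist : Tendsto (fun k => dist (x (k - o k - j)) (x (k - o k - (j + 1))))
        atTop (nhds 0) := by
      have hub : ∀ k, dist (x (k - o k - j)) (x (k - o k - (j + 1))) ≤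
          s * (c₂ * ‖g (x (k - o k - (j + 1)))‖) := by
        intro k
        rcases Nat.eq_zero_or_pos (k - o k - j) with h0 | hpos
        · have h0' : k - o k - (j + 1) = 0 := by omega
          rw [h0, h0', dist_self]
          positivity
        · have e2 : (k - o k - (j + 1)) + 1 = k - o k - j := by omega
          rw [← e2, hx (k - o k - (j + 1)), dist_eq_norm, add_sub_cancel_left, norm_smul,
            Real.norm_eq_abs, abs_of_pos (hαpos _)]
          calc α (k - o k - (j + 1)) * ‖d (k - o k - (j + 1))‖
              ≤ s * ‖d (k - o k - (j + 1))‖ :=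
                mul_le_mul_of_nonneg_right (hαles _) (norm_nonneg _)
            _ ≤ s * (c₂ * ‖g (x (k - o k - (j + 1)))‖) :=
                mul_le_mul_of_nonneg_left (hcd _).2 hs0.le
      have hbt : Tendsto (fun k => s * (c₂ * ‖g (x (k - o k - (j + 1)))‖)) atTop (nhds 0) := by
        have := (hQ.const_mul c₂).const_mul s
        simpa using this
      apply tendsto_of_tendsto_of_tendsto_of_le_of_le' tendsto_const_nhds hbt
      · exact Filter.Eventually.of_forall fun k => dist_nonneg
      · exact Filter.Eventually.of_forall hub
    have hdiff := hUC (fun k => x (k - o k - j)) (fun k => x (k - o k - (j + 1)))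
      (fun k => hxLev _) (fun k => hxLev _) hdist
    have h2 := hP.sub hdiff
    rw [sub_zero] at h2
    apply h2.congr
    intro k
    ring
  have hP : ∀ j, Tendsto (fun k => f (x (k - o k - j))) atTop (nhds Ms) := by
    intro j
    induction j with
    | zero =>
      apply hMtend.congr
      intro k
      simp [ho2 k]
    | succ m ih => exact hQP m ih (hPQ m ih)
  have hQ : ∀ j, Tendsto (fun k => ‖g (x (k - o k - (j + 1)))‖) atTop (nhds 0) :=
    fun j => hPQ j (hP j)
  -- conclusion
  have hoN : ∀ k, o k ≤ N := fun k => le_trans (ho1 k) (min_le_right _ _)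
  have hok : ∀ k, o k ≤ k := fun k => le_trans (ho1 k) (min_le_left _ _)
  rw [Metric.tendsto_atTop]
  intro ε hε
  have hKj : ∀ j : ℕ, ∃ K, ∀ k ≥ K, ‖g (x (k - o k - (j + 1)))‖ < ε := by
    intro j
    have h := hQ j
    rw [Metric.tendsto_atTop] at h
    obtain ⟨K, hK⟩ := h ε hε
    refine ⟨K, fun k hk => ?_⟩
    have := hK k hk
    rwa [Real.dist_eq, sub_zero, abs_of_nonneg (norm_nonneg _)] at this
  choose K hK using hKj
  refine ⟨(Finset.range (N + 1)).sup K, fun k hk => ?_⟩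
  have ho := hoN (k + N + 1)
  have hok' := hok (k + N + 1)
  obtain ⟨j, hjdef⟩ : ∃ j, (k + N + 1) - o (k + N + 1) - k = j + 1 :=
    ⟨(k + N + 1) - o (k + N + 1) - k - 1, by omega⟩
  have hjle : j ≤ N := by omega
  have he : (k + N + 1) - o (k + N + 1) - (j + 1) = k := by omega
  have hKk : K j ≤ k + N + 1 :=
    le_trans (le_trans (Finset.le_sup (Finset.mem_range.2 (by omega))) hk) (by omega)
  have hfin := hK j (k + N + 1) hKk
  rw [he] at hfin
  rwa [Real.dist_eq, sub_zero, abs_of_nonneg (norm_nonneg _)]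
end

section
/- Let n ≥ 1 and let f : ℝⁿ → ℝ be continuously differentiable with gradient g. Fix s ∈ (0,1], ρ ∈ (0,1), σ ∈ (0,1/2), an integer N ≥ 1, and weights η_k ∈ [0,1). Let x_{k+1} = x_k + α_k d_k, where α_k = s ρ^{j_k} and j_k is the smallest j ∈ ℕ with f(x_k + s ρ^j d_k) ≤ T_k + σ s ρ^j ⟨g(x_k), d_k⟩; here f_k = f(x_k), f_{l(k)} = max_{0≤j≤min(k,N)} f_{k−j}, T̄_0 = f_0, T̄_k = (1−η_{k−1}) f_k + η_{k−1} T̄_{k−1} for 1 ≤ k ≤ N−1, T̄_k = Σ_{j=0}^{N−1}(η_{k−1}⋯η_{k−j})(1−η_{k−j−1}) f_{k−j} + (η_{k−1}⋯η_{k−N}) f_{k−N} for k ≥ N, and T_k = f_{l(k)} for k ≤ N−1, T_k = max{T̄_k, f_k} for k ≥ N. Assume (H1) the level set L(x_0) = {x ∈ ℝⁿ : f(x) ≤ f(x_0)} is bounded; (H2) there exist an open convex set C ⊇ L(x_0) and L > 0 with ‖g(x) − g(y)‖ ≤ L‖x − y‖ for all x, y ∈ C; (H3) there exist 0 < c₁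 < 1 < c₂ with ⟨g(x_k), d_k⟩ ≤ −c₁‖g(x_k)‖² and ‖d_k‖ ≤ c₂‖g(x_k)‖ for all k; and g(x_k) ≠ 0 for all k. Then no cluster point x* of the sequence {x_k} is a local maximizer of f, i.e., there is no neighborhood U of x* on which f(y) ≤ f(x*) for all y ∈ U. -/
/-- Second assertion of Theorem 1: under (H1)–(H3) and with nonzero gradients
at every iterate, no cluster point of the sequence generated by the nonmonotone
Armijo-type line search is a local maximizer of `f`. -/
theorem nmls_no_cluster_point_local_max (n : ℕ) (hn : 1 ≤ n)
    (f : EuclideanSpace ℝ (Fin n) → ℝ)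
    (g : EuclideanSpace ℝ (Fin n) → EuclideanSpace ℝ (Fin n))
    (hf : ContDiff ℝ 1 f) (hg : ∀ y, HasGradientAt f (g y) y)
    (s ρ σ : ℝ) (hs : s ∈ Set.Ioc (0 : ℝ) 1) (hρ : ρ ∈ Set.Ioo (0 : ℝ) 1)
    (hσ : σ ∈ Set.Ioo (0 : ℝ) (1 / 2))
    (N : ℕ) (hN : 1 ≤ N) (η : ℕ → ℝ) (hη : ∀ k, η k ∈ Set.Ico (0 : ℝ) 1)
    (x d : ℕ → EuclideanSpace ℝ (Fin n)) (α : ℕ → ℝ) (jk : ℕ → ℕ)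
    (Tbar T fl : ℕ → ℝ)
    (hfl : ∀ k, fl k = (Finset.range (min k N + 1)).sup'
      Finset.nonempty_range_add_one (fun j => f (x (k - j))))
    (hT0 : Tbar 0 = f (x 0))
    (hTrec : ∀ k, 1 ≤ k → k ≤ N - 1 →
      Tbar k = (1 - η (k - 1)) * f (x k) + η (k - 1) * Tbar (k - 1))
    (hTsum : ∀ k, N ≤ k → Tbar k =
      (∑ j ∈ Finset.range N,
          (∏ i ∈ Finset.range j, η (k - 1 - i)) * (1 - η (k - j - 1)) * f (x (k - j)))
        + (∏ i ∈ Finset.range N, η (k - 1 - i)) * f (x (k - N)))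
    (hTlt : ∀ k, k ≤ N - 1 → T k = fl k)
    (hTge : ∀ k, N ≤ k → T k = max (Tbar k) (f (x k)))
    (hjk : ∀ k, IsLeast {j : ℕ | f (x k + (s * ρ ^ j) • d k) ≤
      T k + σ * (s * ρ ^ j) * (inner ℝ (g (x k)) (d k) : ℝ)} (jk k))
    (hα : ∀ k, α k = s * ρ ^ (jk k))
    (hx : ∀ k, x (k + 1) = x k + α k • d k)
    (H1 : Bornology.IsBounded {y : EuclideanSpace ℝ (Fin n) | f y ≤ f (x 0)})
    (H2 : ∃ C : Set (EuclideanSpace ℝ (Fin n)), IsOpen C ∧ Convex ℝ C ∧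
      {y : EuclideanSpace ℝ (Fin n) | f y ≤ f (x 0)} ⊆ C ∧
      ∃ L > (0 : ℝ), ∀ a ∈ C, ∀ b ∈ C, ‖g a - g b‖ ≤ L * ‖a - b‖)
    (H3 : ∃ c₁ c₂ : ℝ, 0 < c₁ ∧ c₁ < 1 ∧ 1 < c₂ ∧
      ∀ k, (inner ℝ (g (x k)) (d k) : ℝ) ≤ -c₁ * ‖g (x k)‖ ^ 2 ∧
        ‖d k‖ ≤ c₂ * ‖g (x k)‖)
    (hnz : ∀ k, g (x k) ≠ 0) :
    ∀ xstar : EuclideanSpace ℝ (Fin n),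
      MapClusterPt xstar Filter.atTop x → ¬ IsLocalMax f xstar := by
  obtain ⟨c₁, c₂, hc₁, hc₁1, hc₂, hH3⟩ := H3
  obtain ⟨hs0, hs1⟩ := hs
  obtain ⟨hρ0, hρ1⟩ := hρ
  obtain ⟨hσ0, hσ1⟩ := hσ
  have hfc : Continuous f := hf.continuous
  have hαpos : ∀ k, 0 < α k := fun k => by rw [hα k]; positivity
  have hαle : ∀ k, α k ≤ s := fun k => by
    rw [hα k]
    calc s * ρ ^ jk k ≤ s * 1 :=
          mul_le_mul_of_nonneg_left (pow_le_one₀ hρ0.le hρ1.le) hs0.le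
      _ = s := mul_one s
  set δ : ℕ → ℝ := fun k => σ * α k * (c₁ * ‖g (x k)‖ ^ 2) with hδdef
  have hδpos : ∀ k, 0 < δ k := fun k => by
    have h1 : 0 < ‖g (x k)‖ := norm_pos_iff.mpr (hnz k)
    have h2 := hαpos k
    simp only [hδdef]
    positivity
  -- decrease with respect to T
  have hdecT : ∀ k, f (x (k + 1)) ≤ T k - δ k := by
    intro k
    have h1 := (hjk k).1
    simp only [Set.mem_setOf_eq] at h1
    have h2 : (inner ℝ (g (x k)) (d k) : ℝ) ≤ -c₁ * ‖g (x k)‖ ^ 2 := (hH3 k).1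
    have h3 : (0 : ℝ) ≤ σ * (s * ρ ^ jk k) := by positivity
    have h4 := mul_le_mul_of_nonneg_left h2 h3
    rw [hx k, hα k]
    simp only [hδdef, hα k]
    nlinarith [h1, h4]
  -- membership facts for fl
  have hflmem : ∀ k j, j ≤ min k N → f (x (k - j)) ≤ fl k := by
    intro k j hj
    rw [hfl k]
    have hj' : j < min k N + 1 := by omega
    exact Finset.le_sup' (fun j => f (x (k - j))) (Finset.mem_range.mpr hj')
  have hffl : ∀ k, f (x k) ≤ fl k := fun k => by
    simpa using hflmem k 0 (by omega)
  -- T k ≤ fl k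
  have hTfl : ∀ k, T k ≤ fl k := by
    intro k
    rcases lt_or_ge k N with hk | hk
    · exact le_of_eq (hTlt k (by omega))
    · rw [hTge k hk]
      refine max_le ?_ (hffl k)
      rw [hTsum k hk]
      have hkey : ∀ j, (∏ i ∈ Finset.range j, η (k - 1 - i)) * (1 - η (k - j - 1)) =
          (∏ i ∈ Finset.range j, η (k - 1 - i)) - (∏ i ∈ Finset.range (j + 1), η (k - 1 - i)) := by
        intro j
        rw [Finset.prod_range_succ]
        have : k - 1 - j = k - j - 1 := by omega
        rw [this]
        ring
      have hcoef : ∀ j, (0 : ℝ) ≤ (∏ i ∈ Finset.range j, η (k - 1 - i)) :=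
        fun j => Finset.prod_nonneg fun i _ => (hη _).1
      have hbound : ∀ j ∈ Finset.range N,
          (∏ i ∈ Finset.range j, η (k - 1 - i)) * (1 - η (k - j - 1)) * f (x (k - j)) ≤
          ((∏ i ∈ Finset.range j, η (k - 1 - i)) -
            (∏ i ∈ Finset.range (j + 1), η (k - 1 - i))) * fl k := by
        intro j hj
        rw [← hkey j]
        refine mul_le_mul_of_nonneg_left (hflmem k j ?_) ?_
        · rw [Finset.mem_range] at hj
          have : min k N = N := min_eq_right hk
          omega
        · have := (hη (k - j - 1)).2
          have := hcoef j
          nlinarith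
      calc (∑ j ∈ Finset.range N,
            (∏ i ∈ Finset.range j, η (k - 1 - i)) * (1 - η (k - j - 1)) * f (x (k - j)))
            + (∏ i ∈ Finset.range N, η (k - 1 - i)) * f (x (k - N))
          ≤ (∑ j ∈ Finset.range N,
            ((∏ i ∈ Finset.range j, η (k - 1 - i)) -
              (∏ i ∈ Finset.range (j + 1), η (k - 1 - i))) * fl k)
            + (∏ i ∈ Finset.range N, η (k - 1 - i)) * fl k := by
            refine add_le_add (Finset.sum_le_sum hbound)
              (mul_le_mul_of_nonneg_left (hflmem k N ?_) (hcoef N))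
            have : min k N = N := min_eq_right hk
            omega
        _ = fl k := by
            rw [← Finset.sum_mul, Finset.sum_range_sub'
              (f := fun j => ∏ i ∈ Finset.range j, η (k - 1 - i))]
            simp
            ring
  have hdec : ∀ k, f (x (k + 1)) ≤ fl k - δ k := fun k =>
    (hdecT k).trans (by linarith [hTfl k])
  -- fl is antitone
  have hflsucc : ∀ k, fl (k + 1) ≤ fl k := by
    intro k
    rw [hfl (k + 1)]
    apply Finset.sup'_le
    intro j hj
    rw [Finset.mem_range] at hj
    rcases Nat.eq_zero_or_pos j with rfl | hjpos
    · simpa using (hdec k).trans (by linarith [hδpos k])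
    · have hj' : j ≤ min (k + 1) N := by omega
      have hj1 : j ≤ k + 1 := hj'.trans (min_le_left _ _)
      have hj2 : j ≤ N := hj'.trans (min_le_right _ _)
      have heq : k + 1 - j = k - (j - 1) := by omega
      rw [heq]
      exact hflmem k (j - 1) (le_min (by omega) (by omega))
  have flAnti : Antitone fl := antitone_nat_of_succ_le hflsucc
  have fl0 : fl 0 = f (x 0) := by rw [hfl 0]; simp
  have hxS : ∀ k, f (x k) ≤ f (x 0) := fun k =>
    (hffl k).trans ((flAnti (Nat.zero_le k)).trans_eq fl0)
  -- the level set is compact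
  set S : Set (EuclideanSpace ℝ (Fin n)) := {y | f y ≤ f (x 0)} with hSdef
  have hxS' : ∀ k, x k ∈ S := fun k => hxS k
  have hSclosed : IsClosed S := isClosed_le hfc continuous_const
  have hScompact : IsCompact S := Metric.isCompact_of_isClosed_isBounded hSclosed H1
  have hSne : S.Nonempty := ⟨x 0, show f (x 0) ≤ f (x 0) from le_refl _⟩
  obtain ⟨z, hzS, hz⟩ := hScompact.exists_isMinOn hSne hfc.continuousOn
  -- the limit F of fl
  have hbdd : BddBelow (Set.range fl) := by
    refine ⟨f z, ?_⟩
    rintro _ ⟨k, rfl⟩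
    exact (isMinOn_iff.mp hz (x k) (hxS' k)).trans (hffl k)
  set F : ℝ := ⨅ k, fl k with hFdef
  have hflF : Filter.Tendsto fl Filter.atTop (nhds F) := tendsto_atTop_ciInf flAnti hbdd
  have hFle : ∀ k, F ≤ fl k := fun k => ciInf_le hbdd k
  -- choose an index attaining the max in fl
  have hlex : ∀ k, ∃ j, j ≤ min k N ∧ fl k = f (x (k - j)) := by
    intro k
    obtain ⟨j, hj, hj2⟩ := Finset.exists_mem_eq_sup'
      (Finset.nonempty_range_add_one (n := min k N)) (fun j => f (x (k - j)))
    exact ⟨j, by have := Finset.mem_range.mp hj; omega, by rw [hfl k]; exact hj2⟩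
  choose J hJle hJeq using hlex
  set l : ℕ → ℕ := fun k => k - J k with hldef
  have hlk1 : ∀ k, k ≤ l k + N := fun k => by
    have h1 := hJle k
    have h2 := min_le_right k N
    have h3 := min_le_left k N
    simp only [hldef]
    omega
  have hlk2 : ∀ k, l k ≤ k := fun k => Nat.sub_le _ _
  have hfll : ∀ k, fl k = f (x (l k)) := hJeq
  -- step-size bound
  set B : ℝ := c₂ ^ 2 * s / (σ * c₁) with hBdef
  have hBpos : 0 < B := by
    have : (0:ℝ) < c₂ := lt_trans one_pos hc₂
    simp only [hBdef]
    positivity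
  have hstep : ∀ k, ‖x (k + 1) - x k‖ ≤ Real.sqrt (B * δ k) := by
    intro k
    have heq : x (k + 1) - x k = α k • d k := by rw [hx k]; abel
    rw [heq, norm_smul, Real.norm_eq_abs, abs_of_pos (hαpos k)]
    apply Real.le_sqrt_of_sq_le
    have hd := (hH3 k).2
    have hBδ : B * δ k = c₂ ^ 2 * s * α k * ‖g (x k)‖ ^ 2 := by
      simp only [hBdef, hδdef]
      field_simp
    rw [hBδ]
    have h1 : 0 ≤ ‖d k‖ := norm_nonneg _
    have h2 : 0 ≤ ‖g (x k)‖ := norm_nonneg _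
    have h3 := hαpos k
    have h4 := hαle k
    have hc₂0 : (0:ℝ) < c₂ := lt_trans one_pos hc₂
    have h5 : α k * ‖d k‖ ≤ α k * (c₂ * ‖g (x k)‖) := mul_le_mul_of_nonneg_left hd h3.le
    have h6 : (α k * ‖d k‖) ^ 2 ≤ (α k * (c₂ * ‖g (x k)‖)) ^ 2 :=
      pow_le_pow_left₀ (by positivity) h5 2
    have h7 : α k * α k ≤ s * α k := mul_le_mul_of_nonneg_right h4 h3.le
    calc (α k * ‖d k‖) ^ 2 ≤ (α k * (c₂ * ‖g (x k)‖)) ^ 2 := h6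
      _ = c₂ ^ 2 * (α k * α k) * ‖g (x k)‖ ^ 2 := by ring
      _ ≤ c₂ ^ 2 * (s * α k) * ‖g (x k)‖ ^ 2 := by gcongr
      _ = c₂ ^ 2 * s * α k * ‖g (x k)‖ ^ 2 := by ring
  have hstep0 : ∀ idx : ℕ → ℕ,
      Filter.Tendsto (fun k => δ (idx k)) Filter.atTop (nhds 0) →
      Filter.Tendsto (fun k => ‖x (idx k + 1) - x (idx k)‖) Filter.atTop (nhds 0) := by
    intro idx hidx
    have h1 : Filter.Tendsto (fun k => B * δ (idx k)) Filter.atTop (nhds 0) := by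
      simpa using hidx.const_mul B
    have h2 : Filter.Tendsto (fun k => Real.sqrt (B * δ (idx k))) Filter.atTop (nhds 0) := by
      have := (Real.continuous_sqrt.continuousAt (x := (0:ℝ))).tendsto.comp h1
      simpa [Function.comp_def] using this
    exact squeeze_zero (fun k => norm_nonneg _) (fun k => hstep _) h2
  -- uniform continuity of f on S
  obtain hUC := Metric.uniformContinuousOn_iff.mp
    (hScompact.uniformContinuousOn_of_continuous hfc.continuousOn)
  have hflcomp : ∀ C : ℕ, Filter.Tendsto (fun k => fl (k - C)) Filter.atTop (nhds F) :=
    fun C => hflF.comp (Filter.tendsto_sub_atTop_nat C)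
  -- auxiliary: from convergence of f(x (l k - j)) deduce δ (l k - j - 1) → 0
  have hδstep : ∀ j : ℕ,
      Filter.Tendsto (fun k => f (x (l k - j))) Filter.atTop (nhds F) →
      Filter.Tendsto (fun k => δ (l k - j - 1)) Filter.atTop (nhds 0) := by
    intro j hA
    have hflm : Filter.Tendsto (fun k => fl (l k - j - 1)) Filter.atTop (nhds F) := by
      refine tendsto_of_tendsto_of_tendsto_of_le_of_le' tendsto_const_nhds
        (hflcomp (N + j + 1)) (Filter.Eventually.of_forall fun k => hFle _)
        (Filter.Eventually.of_forall fun k => flAnti (by have := hlk1 k; omega))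
    have hfm : Filter.Tendsto (fun k => f (x (l k - j - 1 + 1))) Filter.atTop (nhds F) := by
      refine Filter.Tendsto.congr' ?_ hA
      filter_upwards [Filter.eventually_ge_atTop (N + j + 1)] with k hk
      have := hlk1 k
      rw [show l k - j - 1 + 1 = l k - j from by omega]
    have hsub : Filter.Tendsto
        (fun k => fl (l k - j - 1) - f (x (l k - j - 1 + 1))) Filter.atTop (nhds 0) := by
      simpa using hflm.sub hfm
    refine squeeze_zero (fun k => (hδpos _).le) (fun k => ?_) hsub
    have := hdec (l k - j - 1)
    linarith
  -- the main GLL-style induction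
  have main : ∀ j : ℕ,
      Filter.Tendsto (fun k => f (x (l k - j))) Filter.atTop (nhds F) ∧
      Filter.Tendsto (fun k => δ (l k - j - 1)) Filter.atTop (nhds 0) := by
    intro j
    induction j with
    | zero =>
      have hA : Filter.Tendsto (fun k => f (x (l k - 0))) Filter.atTop (nhds F) := by
        simpa using hflF.congr hfll
      exact ⟨hA, hδstep 0 hA⟩
    | succ j ih =>
      obtain ⟨ihA, ihδ⟩ := ih
      have hA : Filter.Tendsto (fun k => f (x (l k - (j + 1)))) Filter.atTop (nhds F) := by
        rw [Metric.tendsto_atTop]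
        intro ε hε
        obtain ⟨δ', hδ'pos, hδ'⟩ := hUC (ε / 2) (by linarith)
        have hsteps := hstep0 (fun k => l k - j - 1) ihδ
        have h1 : ∀ᶠ k in Filter.atTop, ‖x (l k - j - 1 + 1) - x (l k - j - 1)‖ < δ' :=
          hsteps.eventually_lt_const hδ'pos
        have h2 : ∀ᶠ k in Filter.atTop, dist (f (x (l k - j))) F < ε / 2 := by
          have := Metric.tendsto_atTop.mp ihA (ε / 2) (by linarith)
          obtain ⟨K, hK⟩ := this
          filter_upwards [Filter.eventually_ge_atTop K] with k hk
          exact hK k hk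
        have hall : ∀ᶠ k in Filter.atTop, dist (f (x (l k - (j + 1)))) F < ε := by
          filter_upwards [h1, h2, Filter.eventually_ge_atTop (N + j + 2)] with k hk1 hk2 hk3
          have hlge : j + 1 ≤ l k := by have := hlk1 k; omega
          have hidx : l k - j = l k - (j + 1) + 1 := by omega
          have hidx2 : l k - j - 1 = l k - (j + 1) := by omega
          have hd1 : dist (f (x (l k - (j + 1)))) (f (x (l k - j))) < ε / 2 := by
            refine hδ' _ (hxS' _) _ (hxS' _) ?_
            rw [hidx, dist_comm, dist_eq_norm]
            rw [hidx2] at hk1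
            exact hk1
          calc dist (f (x (l k - (j + 1)))) F
              ≤ dist (f (x (l k - (j + 1)))) (f (x (l k - j))) + dist (f (x (l k - j))) F :=
                dist_triangle _ _ _
            _ < ε / 2 + ε / 2 := add_lt_add hd1 hk2
            _ = ε := by ring
        exact Filter.eventually_atTop.mp hall
      exact ⟨hA, hδstep (j + 1) hA⟩
  -- δ tends to zero along the whole sequence
  have hδ0 : Filter.Tendsto δ Filter.atTop (nhds 0) := by
    rw [Metric.tendsto_atTop]
    intro ε hε
    have hev : ∀ j ∈ Finset.range (N + 1),
        ∀ᶠ K in Filter.atTop, δ (l K - j - 1) < ε :=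
      fun j _ => (main j).2.eventually_lt_const hε
    have hev2 : ∀ᶠ K in Filter.atTop, ∀ j ∈ Finset.range (N + 1), δ (l K - j - 1) < ε :=
      (Filter.eventually_all_finset _).mpr hev
    obtain ⟨M, hM⟩ := Filter.eventually_atTop.mp hev2
    refine ⟨M, fun k hk => ?_⟩
    have hK := hM (k + N + 1) (by omega)
    have h1 : k + 1 ≤ l (k + N + 1) := by have := hlk1 (k + N + 1); omega
    have h2 : l (k + N + 1) ≤ k + N + 1 := hlk2 _
    have hj : l (k + N + 1) - 1 - k ∈ Finset.range (N + 1) := Finset.mem_range.mpr (by omega)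
    have h3 := hK _ hj
    have hidx : l (k + N + 1) - (l (k + N + 1) - 1 - k) - 1 = k := by omega
    rw [hidx] at h3
    rw [Real.dist_eq, sub_zero, abs_of_nonneg (hδpos k).le]
    exact h3
  have hstepT : Filter.Tendsto (fun k => ‖x (k + 1) - x k‖) Filter.atTop (nhds 0) := by
    have := hstep0 (fun k => k) (by simpa using hδ0)
    simpa using this
  -- now the main argument
  intro xstar hclus hmax
  have hfreq : ∀ U ∈ nhds xstar, ∃ᶠ k in Filter.atTop, x k ∈ U := mapClusterPt_iff_frequently.mp hclus
  -- f xstar ≤ F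
  have hfxF : f xstar ≤ F := by
    by_contra hlt
    push_neg at hlt
    set c : ℝ := (F + f xstar) / 2 with hcdef
    have hc1 : F < c := by simp only [hcdef]; linarith
    have hc2 : c < f xstar := by simp only [hcdef]; linarith
    have hcont : ∀ᶠ y in nhds xstar, c < f y :=
      (hfc.continuousAt (x := xstar)).eventually_const_lt hc2
    have hflev : ∀ᶠ k in Filter.atTop, fl k < c := hflF.eventually_lt_const hc1
    have := (hfreq _ hcont).and_eventually hflev
    obtain ⟨k, hk1, hk2⟩ := this.exists
    have hk1' : c < f (x k) := hk1
    have := hffl k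
    linarith
  -- each fl k is strictly above f xstar
  have hflgt : ∀ k, f xstar < fl k := by
    intro k0
    by_contra hle
    push_neg at hle
    have h1 : k0 + 1 ≤ l (k0 + N + 1) := by have := hlk1 (k0 + N + 1); omega
    have h2 := hdec (l (k0 + N + 1) - 1)
    have hidx : l (k0 + N + 1) - 1 + 1 = l (k0 + N + 1) := by omega
    rw [hidx] at h2
    have h3 : fl (l (k0 + N + 1) - 1) ≤ fl k0 := flAnti (by omega)
    have h4 := hδpos (l (k0 + N + 1) - 1)
    have h5 := hFle (k0 + N + 1)
    have h6 := hfll (k0 + N + 1)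
    linarith
  -- local max gives a ball
  obtain ⟨ε, hεpos, hε⟩ := Metric.eventually_nhds_iff.mp hmax
  have hbpos : (0:ℝ) < ε / (2 * ((N : ℝ) + 1)) := by positivity
  have hsmall : ∀ᶠ k in Filter.atTop, ‖x (k + 1) - x k‖ < ε / (2 * ((N : ℝ) + 1)) :=
    hstepT.eventually_lt_const hbpos
  obtain ⟨M, hM⟩ := Filter.eventually_atTop.mp hsmall
  have hfreq2 : ∃ᶠ k in Filter.atTop, x k ∈ Metric.ball xstar (ε / 2) :=
    hfreq _ (Metric.ball_mem_nhds _ (by positivity))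
  obtain ⟨k, hkball, hkge⟩ :=
    (hfreq2.and_eventually (Filter.eventually_ge_atTop (M + N))).exists
  have hm0 : k ≤ l k + N := hlk1 k
  have hm0k : l k ≤ k := hlk2 k
  have hsum : dist (x (l k)) (x k) ≤ ∑ i ∈ Finset.Ico (l k) k, dist (x i) (x (i + 1)) :=
    dist_le_Ico_sum_dist x hm0k
  have hterm : ∀ i ∈ Finset.Ico (l k) k, dist (x i) (x (i + 1)) ≤ ε / (2 * ((N : ℝ) + 1)) := by
    intro i hi
    rw [Finset.mem_Ico] at hi
    have hiM : M ≤ i := by omega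
    rw [dist_comm, dist_eq_norm]
    exact (hM i hiM).le
  have hdm : dist (x (l k)) (x k) ≤ (N : ℝ) * (ε / (2 * ((N : ℝ) + 1))) := by
    calc dist (x (l k)) (x k) ≤ ∑ i ∈ Finset.Ico (l k) k, dist (x i) (x (i + 1)) := hsum
      _ ≤ (Finset.Ico (l k) k).card • (ε / (2 * ((N : ℝ) + 1))) :=
          Finset.sum_le_card_nsmul _ _ _ hterm
      _ = ((k - l k : ℕ) : ℝ) * (ε / (2 * ((N : ℝ) + 1))) := by
          rw [Nat.card_Ico, nsmul_eq_mul]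
      _ ≤ (N : ℝ) * (ε / (2 * ((N : ℝ) + 1))) := by
          refine mul_le_mul_of_nonneg_right ?_ hbpos.le
          exact_mod_cast (by omega : k - l k ≤ N)
  have hNle : (N : ℝ) * (ε / (2 * ((N : ℝ) + 1))) ≤ ε / 2 := by
    have h1 : (N : ℝ) ≤ (N : ℝ) + 1 := by linarith
    calc (N : ℝ) * (ε / (2 * ((N : ℝ) + 1)))
        ≤ ((N : ℝ) + 1) * (ε / (2 * ((N : ℝ) + 1))) :=
          mul_le_mul_of_nonneg_right h1 hbpos.le
      _ = ε / 2 := by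
          have hne : ((N : ℝ) + 1) ≠ 0 := by positivity
          field_simp
  have hfinal : dist (x (l k)) xstar < ε := by
    have hb := Metric.mem_ball.mp hkball
    calc dist (x (l k)) xstar ≤ dist (x (l k)) (x k) + dist (x k) xstar := dist_triangle _ _ _
      _ < ε / 2 + ε / 2 := add_lt_add_of_le_of_lt (hdm.trans hNle) hb
      _ = ε := by ring
  have hle := hε hfinal
  have hgt := hflgt k
  rw [hfll k] at hgt
  linarith
end
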